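/- arXiv:1210.7581 — 5 statements merged into one kernel-verified Lean document; each statement's English description precedes it below -/
import Mathlib

section
/- Let (Ω, ℬ, P) be a non-atomic probability space, let Y ∈ L^∞(Ω, P) be real-valued, and fix s ∈ [0,1]. Let K = {Z ∈ L^∞(Ω, P) : 0 ≤ Z ≤ 1 a.e. and ∫ Z dP ≥ s}. Then the extreme points of the convex set K are exactly the indicator functions 1_E with E ∈ ℬ and P(E) ≥ s. -/
open MeasureTheory

private lemma pt_one {a b u v : ℝ} (ha : 0 < a) (hb : 0 < b) (hab : a + b = 1)
    (hu : u ≤ 1) (hv : v ≤ 1) (h : a * u + b * v = 1) : u = 1 ∧ v = 1 := by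
  constructor <;> nlinarith

private lemma pt_zero {a b u v : ℝ} (ha : 0 < a) (hb : 0 < b)
    (hu : 0 ≤ u) (hv : 0 ≤ v) (h : a * u + b * v = 0) : u = 0 ∧ v = 0 := by
  constructor <;> nlinarith

theorem stmt_5 {Ω : Type*} [MeasurableSpace Ω] (P : Measure Ω) [IsProbabilityMeasure P]
    (hna : ∀ E : Set Ω, MeasurableSet E → P E ≠ 0 →
      ∃ F : Set Ω, MeasurableSet F ∧ F ⊆ E ∧ 0 < P F ∧ P F < P E)
    (Y : Lp ℝ ⊤ P) (s : ℝ) (hs : s ∈ Set.Icc (0 : ℝ) 1)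
    (K : Set (Lp ℝ ⊤ P))
    (hK : K = {Z : Lp ℝ ⊤ P | (∀ᵐ ω ∂P, 0 ≤ Z ω ∧ Z ω ≤ 1) ∧ s ≤ ∫ ω, Z ω ∂P}) :
    Set.extremePoints ℝ K =
      {Z : Lp ℝ ⊤ P | ∃ E : Set Ω, MeasurableSet E ∧ s ≤ (P E).toReal ∧
        ∀ᵐ ω ∂P, Z ω = Set.indicator E (fun _ => (1 : ℝ)) ω} := by
  subst hK
  ext Z
  simp only [Set.mem_setOf_eq, mem_extremePoints]
  constructor
  · rintro ⟨⟨hbd, hint⟩, hext⟩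
    set g : Ω → ℝ := (Lp.aestronglyMeasurable Z).mk Z with hgdef
    have hZg : ⇑Z =ᵐ[P] g := (Lp.aestronglyMeasurable Z).ae_eq_mk
    have hgm : Measurable g := (Lp.aestronglyMeasurable Z).measurable_mk
    by_cases hall : ∀ n : ℕ,
        P {ω | 1 / (n + 2 : ℝ) ≤ g ω ∧ g ω ≤ 1 - 1 / (n + 2 : ℝ)} = 0
    · -- Z takes values in {0,1} a.e.
      have hae : ∀ᵐ ω ∂P, ∀ n : ℕ,
          ¬ (1 / (n + 2 : ℝ) ≤ g ω ∧ g ω ≤ 1 - 1 / (n + 2 : ℝ)) := by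
        rw [ae_all_iff]
        intro n
        rw [ae_iff]
        simpa using hall n
      have h01 : ∀ᵐ ω ∂P, Z ω = Set.indicator (g ⁻¹' {1}) (fun _ => (1 : ℝ)) ω := by
        filter_upwards [hbd, hZg, hae] with ω hb hg hn
        have hval : g ω = 0 ∨ g ω = 1 := by
          by_contra hcon
          push_neg at hcon
          have h0 : 0 < g ω := lt_of_le_of_ne (hg ▸ hb.1) (Ne.symm hcon.1)
          have h1 : g ω < 1 := lt_of_le_of_ne (hg ▸ hb.2) hcon.2
          obtain ⟨n, hnlt⟩ := exists_nat_one_div_lt (lt_min h0 (by linarith : (0:ℝ) < 1 - g ω))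
          have hle : 1 / (n + 2 : ℝ) < min (g ω) (1 - g ω) := by
            refine lt_of_le_of_lt ?_ hnlt
            apply one_div_le_one_div_of_le
            · positivity
            · linarith
          exact hn n ⟨le_of_lt (hle.trans_le (min_le_left _ _)),
            by have := hle.trans_le (min_le_right _ _); linarith⟩
        rcases hval with h | h
        · have : ω ∉ g ⁻¹' {1} := by simp [Set.mem_preimage, h]
          rw [Set.indicator_of_notMem this, hg, h]
        · have : ω ∈ g ⁻¹' {1} := by simp [Set.mem_preimage, h]
          rw [Set.indicator_of_mem this, hg, h]
      refine ⟨g ⁻¹' {1}, hgm (measurableSet_singleton 1), ?_, h01⟩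
      have : ∫ ω, Z ω ∂P = (P (g ⁻¹' {1})).toReal := by
        rw [integral_congr_ae h01]
        simpa [measureReal_def] using integral_indicator_const (1 : ℝ) (hgm (measurableSet_singleton 1)) (μ := P)
      linarith [hint, this.symm.le]
    · -- contradiction with extremality
      exfalso
      push_neg at hall
      obtain ⟨n, hn⟩ := hall
      set ε : ℝ := 1 / (n + 2 : ℝ) with hεdef
      have hε : 0 < ε := by positivity
      set A : Set Ω := {ω | ε ≤ g ω ∧ g ω ≤ 1 - ε} with hAdef
      have hAm : MeasurableSet A := by
        have : A = g ⁻¹' Set.Icc ε (1 - ε) := rfl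
        rw [this]; exact hgm measurableSet_Icc
      obtain ⟨F, hFm, hFA, hFpos, hFlt⟩ := hna A hAm hn
      set F2 : Set Ω := A \ F with hF2def
      have hF2m : MeasurableSet F2 := hAm.diff hFm
      have hF2pos : 0 < P F2 := by
        by_contra hcon
        push_neg at hcon
        have h0 : P F2 = 0 := le_antisymm hcon zero_le
        have : P A ≤ P F + P F2 :=
          le_trans (measure_mono (fun ω hω => by
            by_cases h : ω ∈ F
            · exact Set.mem_union_left _ h
            · exact Set.mem_union_right _ ⟨hω, h⟩)) (measure_union_le F F2)
        rw [h0, add_zero] at this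
        exact absurd this (not_le.mpr hFlt)
      set c1 : ℝ := ε * (P F2).toReal with hc1def
      set c2 : ℝ := ε * (P F).toReal with hc2def
      have hPF1 : (P F).toReal ≤ 1 := by
        have := ENNReal.toReal_mono (by simp) (prob_le_one (μ := P) (s := F))
        simpa using this
      have hPF21 : (P F2).toReal ≤ 1 := by
        have := ENNReal.toReal_mono (by simp) (prob_le_one (μ := P) (s := F2))
        simpa using this
      have hPFpos : 0 < (P F).toReal :=
        ENNReal.toReal_pos (ne_of_gt hFpos) (measure_ne_top P F)
      have hPF2pos : 0 < (P F2).toReal :=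
        ENNReal.toReal_pos (ne_of_gt hF2pos) (measure_ne_top P F2)
      have hc1pos : 0 < c1 := mul_pos hε hPF2pos
      have hc2pos : 0 < c2 := mul_pos hε hPFpos
      have hc1le : c1 ≤ ε := by
        calc c1 = ε * (P F2).toReal := rfl
        _ ≤ ε * 1 := by gcongr
        _ = ε := mul_one ε
      have hc2le : c2 ≤ ε := by
        calc c2 = ε * (P F).toReal := rfl
        _ ≤ ε * 1 := by gcongr
        _ = ε := mul_one ε
      set W : Lp ℝ ⊤ P :=
        (indicatorConstLp ⊤ hFm (measure_ne_top P F) c1) -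
          (indicatorConstLp ⊤ hF2m (measure_ne_top P F2) c2) with hWdef
      have hW : ⇑W =ᵐ[P] fun ω =>
          Set.indicator F (fun _ => c1) ω - Set.indicator F2 (fun _ => c2) ω := by
        filter_upwards [Lp.coeFn_sub (indicatorConstLp ⊤ hFm (measure_ne_top P F) c1)
            (indicatorConstLp ⊤ hF2m (measure_ne_top P F2) c2),
          indicatorConstLp_coeFn (p := ⊤) (hs := hFm) (hμs := measure_ne_top P F) (c := c1),
          indicatorConstLp_coeFn (p := ⊤) (hs := hF2m) (hμs := measure_ne_top P F2) (c := c2)]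
          with ω h1 h2 h3
        rw [hWdef]
        simp only [h1, Pi.sub_apply, h2, h3]
      have hWint : ∫ ω, W ω ∂P = 0 := by
        rw [integral_congr_ae hW, integral_sub
          ((integrable_const c1).indicator hFm) ((integrable_const c2).indicator hF2m),
          integral_indicator_const c1 hFm, integral_indicator_const c2 hF2m]
        simp only [smul_eq_mul, hc1def, hc2def, measureReal_def]
        ring
      have hWintg : Integrable (⇑W) P := (Lp.memLp W).integrable le_top
      have hmemK : ∀ t : ℝ, |t| ≤ 1 →
          Z + t • W ∈ {Z : Lp ℝ ⊤ P | (∀ᵐ ω ∂P, 0 ≤ Z ω ∧ Z ω ≤ 1) ∧ s ≤ ∫ ω, Z ω ∂P} := by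
        intro t ht
        constructor
        · filter_upwards [hbd, hZg, Lp.coeFn_add Z (t • W), Lp.coeFn_smul t W, hW]
            with ω hb hg hadd hsmul hw
          rw [hadd]
          simp only [Pi.add_apply, hsmul, Pi.smul_apply, smul_eq_mul, hw]
          by_cases hωF : ω ∈ F
          · have hωA : ω ∈ A := hFA hωF
            have hωF2 : ω ∉ F2 := fun h => h.2 hωF
            rw [Set.indicator_of_mem hωF, Set.indicator_of_notMem hωF2]
            have hgA : ε ≤ g ω ∧ g ω ≤ 1 - ε := hωA
            have habs : |t * (c1 - 0)| ≤ ε := by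
              rw [sub_zero, abs_mul]
              calc |t| * |c1| ≤ 1 * |c1| := by gcongr
              _ = c1 := by rw [one_mul, abs_of_pos hc1pos]
              _ ≤ ε := hc1le
            rw [abs_le] at habs
            constructor <;> [linarith [hg ▸ hgA.1]; linarith [hg ▸ hgA.2]]
          · by_cases hωF2 : ω ∈ F2
            · have hωA : ω ∈ A := hωF2.1
              rw [Set.indicator_of_notMem hωF, Set.indicator_of_mem hωF2]
              have hgA : ε ≤ g ω ∧ g ω ≤ 1 - ε := hωA
              have habs : |t * (0 - c2)| ≤ ε := by
                rw [zero_sub, abs_mul, abs_neg]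
                calc |t| * |c2| ≤ 1 * |c2| := by gcongr
                _ = c2 := by rw [one_mul, abs_of_pos hc2pos]
                _ ≤ ε := hc2le
              rw [abs_le] at habs
              constructor <;> [linarith [hg ▸ hgA.1]; linarith [hg ▸ hgA.2]]
            · rw [Set.indicator_of_notMem hωF, Set.indicator_of_notMem hωF2]
              simpa using hb
        · have : ∫ ω, (Z + t • W) ω ∂P = ∫ ω, Z ω ∂P := by
            rw [integral_congr_ae (Lp.coeFn_add Z (t • W))]
            simp only [Pi.add_apply]
            rw [integral_add ((Lp.memLp Z).integrable le_top)
                ((Lp.memLp (t • W)).integrable le_top),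
              integral_congr_ae (Lp.coeFn_smul t W)]
            simp only [Pi.smul_apply]
            rw [integral_smul, hWint]
            simp
          rw [this]
          exact hint
      have hseg : Z ∈ openSegment ℝ (Z + (1:ℝ) • W) (Z + (-1:ℝ) • W) :=
        ⟨1/2, 1/2, by norm_num, by norm_num, by norm_num, by module⟩
      have := hext (Z + (1:ℝ) • W) (hmemK 1 (by norm_num))
        (Z + (-1:ℝ) • W) (hmemK (-1) (by norm_num)) hseg
      have hW0 : W = 0 := by
        have h := this.1
        have : (1:ℝ) • W = 0 := by
          have := congrArg (fun x => x - Z) h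
          simpa [add_sub_cancel_left] using this
        simpa using this
      have hWz : ∀ᵐ ω ∂P, Set.indicator F (fun _ => c1) ω
          - Set.indicator F2 (fun _ => c2) ω = 0 := by
        filter_upwards [hW, Lp.coeFn_zero (E := ℝ) (p := ⊤) (μ := P)] with ω h1 h2
        rw [← h1, hW0, h2]
        simp
      have hsub : F ⊆ {ω | ¬ (Set.indicator F (fun _ => c1) ω
          - Set.indicator F2 (fun _ => c2) ω = 0)} := by
        intro ω hω
        have hωF2 : ω ∉ F2 := fun h => h.2 hω
        simp only [Set.mem_setOf_eq, Set.indicator_of_mem hω, Set.indicator_of_notMem hωF2,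
          sub_zero]
        exact ne_of_gt hc1pos
      have : P F = 0 := by
        refine le_antisymm ?_ zero_le
        calc P F ≤ P {ω | ¬ (Set.indicator F (fun _ => c1) ω
            - Set.indicator F2 (fun _ => c2) ω = 0)} := measure_mono hsub
        _ = 0 := by rw [← ae_iff] at *; exact ae_iff.mp hWz
      exact absurd this (ne_of_gt hFpos)
  · rintro ⟨E, hEm, hsE, hZE⟩
    have hintZ : ∫ ω, Z ω ∂P = (P E).toReal := by
      rw [integral_congr_ae hZE]
      simpa [measureReal_def] using integral_indicator_const (1 : ℝ) hEm (μ := P)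
    have hmem : (∀ᵐ ω ∂P, 0 ≤ Z ω ∧ Z ω ≤ 1) ∧ s ≤ ∫ ω, Z ω ∂P := by
      constructor
      · filter_upwards [hZE] with ω h
        rw [h]
        by_cases hω : ω ∈ E
        · rw [Set.indicator_of_mem hω]; norm_num
        · rw [Set.indicator_of_notMem hω]; norm_num
      · rw [hintZ]; exact hsE
    refine ⟨hmem, ?_⟩
    rintro x1 ⟨hx1bd, _⟩ x2 ⟨hx2bd, _⟩ ⟨a, b, ha, hb, hab, hsum⟩
    have hsum' : ∀ᵐ ω ∂P, a * x1 ω + b * x2 ω = Z ω := by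
      have h1 : ⇑(a • x1 + b • x2) =ᵐ[P] ⇑Z := hsum ▸ Filter.EventuallyEq.rfl
      filter_upwards [h1, Lp.coeFn_add (a • x1) (b • x2), Lp.coeFn_smul a x1,
        Lp.coeFn_smul b x2] with ω h hadd hs1 hs2
      rw [← h, hadd]
      simp [hs1, hs2]
    have hkey : ∀ᵐ ω ∂P, x1 ω = Z ω ∧ x2 ω = Z ω := by
      filter_upwards [hsum', hZE, hx1bd, hx2bd] with ω hsum hz h1 h2
      by_cases hω : ω ∈ E
      · rw [Set.indicator_of_mem hω] at hz
        have := pt_one ha hb hab h1.2 h2.2 (by rw [hsum, hz])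
        exact ⟨by rw [this.1, hz], by rw [this.2, hz]⟩
      · rw [Set.indicator_of_notMem hω] at hz
        have := pt_zero ha hb h1.1 h2.1 (by rw [hsum, hz])
        exact ⟨by rw [this.1, hz], by rw [this.2, hz]⟩
    constructor
    · exact Lp.ext (hkey.mono fun ω h => h.1)
    · exact Lp.ext (hkey.mono fun ω h => h.2)
end

section
/- Let a be a Hermitian matrix in M_n(ℂ) with distinct eigenvalues λ₁ < λ₂ < ⋯ < λ_n, and let 1 ≤ j ≤ n. If p₀ is an orthogonal projection of rank ≥ j minimizing Tr(a p) over all projections p of rank ≥ j, then p₀ commutes with a. -/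
open Matrix

open NormedSpace in
theorem stmt_7 {n : ℕ} (a : Matrix (Fin n) (Fin n) ℂ) (ha : a.IsHermitian)
    (lam : Fin n → ℝ) (hlam : StrictMono lam)
    (U : Matrix (Fin n) (Fin n) ℂ) (hU : U ∈ Matrix.unitaryGroup (Fin n) ℂ)
    (hdiag : a = U * Matrix.diagonal (fun i => (lam i : ℂ)) * star U)
    (j : ℕ) (hj1 : 1 ≤ j) (hjn : j ≤ n)
    (p₀ : Matrix (Fin n) (Fin n) ℂ) (hp₀proj : p₀ * p₀ = p₀) (hp₀sa : p₀.IsHermitian)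
    (hp₀rank : j ≤ p₀.rank)
    (hmin : ∀ p : Matrix (Fin n) (Fin n) ℂ, p * p = p → p.IsHermitian → j ≤ p.rank →
      (Matrix.trace (a * p₀)).re ≤ (Matrix.trace (a * p)).re) :
    a * p₀ = p₀ * a := by
  classical
  letI : SeminormedRing (Matrix (Fin n) (Fin n) ℂ) := Matrix.linftyOpSemiNormedRing
  letI : NormedRing (Matrix (Fin n) (Fin n) ℂ) := Matrix.linftyOpNormedRing
  letI : NormedAlgebra ℝ (Matrix (Fin n) (Fin n) ℂ) := Matrix.linftyOpNormedAlgebra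
  haveI : CompleteSpace (Matrix (Fin n) (Fin n) ℂ) := FiniteDimensional.complete ℝ _
  set c : Matrix (Fin n) (Fin n) ℂ := p₀ * a - a * p₀ with hc
  suffices hc0 : c = 0 by
    have h := sub_eq_zero.mp hc0
    exact h.symm
  have hcs : cᴴ = -c := by
    simp only [hc, conjTranspose_sub, conjTranspose_mul, ha.eq, hp₀sa.eq, neg_sub]
  set M : Matrix (Fin n) (Fin n) ℂ := -c with hM
  have hMs : Mᴴ = -M := by simp [hM, hcs]
  -- the curve of unitaries
  set u : ℝ → Matrix (Fin n) (Fin n) ℂ := fun t => exp (t • M) with hu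
  have hsmulH : ∀ t : ℝ, (t • M)ᴴ = t • (-M) := by
    intro t
    rw [conjTranspose_smul, hMs]
    simp
  have huH : ∀ t : ℝ, (u t)ᴴ = exp (t • (-M)) := by
    intro t
    rw [hu, ← Matrix.exp_conjTranspose, hsmulH]
  have hmul1 : ∀ t : ℝ, exp (t • M) * exp (t • (-M)) = 1 := by
    intro t
    rw [← Matrix.exp_add_of_commute]
    · simp
    · simp [Commute, SemiconjBy, smul_neg, mul_neg, neg_mul]
  have hmul2 : ∀ t : ℝ, exp (t • (-M)) * exp (t • M) = 1 := by
    intro t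
    rw [← Matrix.exp_add_of_commute]
    · simp
    · simp [Commute, SemiconjBy, smul_neg, mul_neg, neg_mul]
  -- the family of projections
  set p : ℝ → Matrix (Fin n) (Fin n) ℂ := fun t => u t * p₀ * (u t)ᴴ with hp
  have hp_proj : ∀ t, p t * p t = p t := by
    intro t
    simp only [hp, huH]
    calc exp (t • M) * p₀ * exp (t • (-M)) * (exp (t • M) * p₀ * exp (t • (-M)))
        = exp (t • M) * p₀ * (exp (t • (-M)) * exp (t • M)) * p₀ * exp (t • (-M)) := by
          simp only [mul_assoc]
      _ = exp (t • M) * p₀ * exp (t • (-M)) := by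
          rw [hmul2]
          rw [mul_one, mul_assoc _ p₀ p₀, hp₀proj]
  have hp_sa : ∀ t, (p t).IsHermitian := by
    intro t
    show (u t * p₀ * (u t)ᴴ)ᴴ = u t * p₀ * (u t)ᴴ
    rw [conjTranspose_mul, conjTranspose_mul, conjTranspose_conjTranspose, hp₀sa.eq,
      ← mul_assoc]
  have hdet1 : ∀ t, IsUnit (u t).det := by
    intro t
    exact (Matrix.isUnit_iff_isUnit_det _).mp (Matrix.isUnit_exp _)
  have hdet2 : ∀ t, IsUnit ((u t)ᴴ).det := by
    intro t
    rw [Matrix.det_conjTranspose]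
    exact (hdet1 t).star
  have hp_rank : ∀ t, j ≤ (p t).rank := by
    intro t
    have h1 : (p t).rank = (p₀ * (u t)ᴴ).rank := by
      simp only [hp]
      rw [mul_assoc]
      exact Matrix.rank_mul_eq_right_of_isUnit_det _ _ (hdet1 t)
    have h2 : (p₀ * (u t)ᴴ).rank = p₀.rank :=
      Matrix.rank_mul_eq_left_of_isUnit_det _ _ (hdet2 t)
    rw [h1, h2]; exact hp₀rank
  -- the function to minimize
  have hL : ∃ L : Matrix (Fin n) (Fin n) ℂ →ₗ[ℝ] ℝ,
      ∀ X, L X = (Matrix.trace (a * X)).re := by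
    refine ⟨{ toFun := fun X => (Matrix.trace (a * X)).re, map_add' := ?_, map_smul' := ?_ }, 
      fun X => rfl⟩
    · intro X Y; simp [mul_add]
    · intro t X
      simp [Matrix.mul_smul, Complex.real_smul]
  obtain ⟨L, hLdef⟩ := hL
  have hLc : Continuous L := L.continuous_of_finiteDimensional
  set g : ℝ → ℝ := fun t => L (exp (t • M) * p₀ * exp (t • (-M))) with hg
  have hgp : ∀ t, g t = (Matrix.trace (a * p t)).re := by
    intro t
    simp only [hg, hLdef, hp, huH, hu]
    rw [← Matrix.exp_conjTranspose, hsmulH]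
  -- g has a local min at 0
  have hmin0 : IsLocalMin g 0 := by
    apply Filter.Eventually.of_forall
    intro t
    rw [hgp, hgp]
    have h0 : p 0 = p₀ := by
      simp [hp, hu, huH]
    rw [h0]
    exact hmin (p t) (hp_proj t) (hp_sa t) (hp_rank t)
  -- derivative of g at 0
  have h1 : HasDerivAt (fun t : ℝ => exp (t • M)) M 0 := by
    have := hasDerivAt_exp_smul_const (𝕂 := ℝ) M (0 : ℝ)
    simp at this
    exact this
  have h2 : HasDerivAt (fun t : ℝ => exp (t • (-M))) (-M) 0 := by
    have := hasDerivAt_exp_smul_const (𝕂 := ℝ) (-M) (0 : ℝ)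
    simp at this ⊢
    exact this
  have hF : HasDerivAt (fun t : ℝ => exp (t • M) * p₀ * exp (t • (-M)))
      (M * p₀ - p₀ * M) 0 := by
    have := ((h1.mul_const p₀).mul h2)
    simp [sub_eq_add_neg, mul_neg] at this ⊢
    exact this
  have hgd : HasDerivAt g (L (M * p₀ - p₀ * M)) 0 := by
    have := (L.toContinuousLinearMap.hasFDerivAt.comp_hasDerivAt 0 hF)
    exact this
  have hz : L (M * p₀ - p₀ * M) = 0 := hmin0.hasDerivAt_eq_zero hgd
  -- identify the derivative with trace (c * cᴴ)
  have e1 : Matrix.trace (a * (M * p₀ - p₀ * M)) = Matrix.trace (c * cᴴ) := by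
    have t1 : Matrix.trace (a * (M * p₀)) = Matrix.trace ((p₀ * a) * M) := by
      rw [← mul_assoc, Matrix.trace_mul_comm (a * M) p₀, ← mul_assoc]
    have t2 : Matrix.trace (a * (p₀ * M)) = Matrix.trace ((a * p₀) * M) := by
      rw [← mul_assoc]
    rw [mul_sub, Matrix.trace_sub, t1, t2, ← Matrix.trace_sub, ← Matrix.sub_mul, ← hc, hcs]
  have hz2 : (Matrix.trace (c * cᴴ)).re = 0 := by
    rw [hLdef] at hz
    rw [← e1, hz]
  -- trace (c * cᴴ) is the sum of |c i j|²
  have htr : (Matrix.trace (c * cᴴ)).re = ∑ i, ∑ j, Complex.normSq (c i j) := by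
    simp only [Matrix.trace, Matrix.diag, Matrix.mul_apply, Matrix.conjTranspose_apply,
      Complex.mul_conj]
    rw [Complex.re_sum]
    refine Finset.sum_congr rfl fun i _ => ?_
    rw [Complex.re_sum]
    refine Finset.sum_congr rfl fun k _ => ?_
    simp [Complex.normSq_apply]
  have hsum : ∑ i, ∑ j, Complex.normSq (c i j) = 0 := by rw [← htr, hz2]
  ext i k
  have h1 : ∀ i ∈ Finset.univ, (0:ℝ) ≤ ∑ j, Complex.normSq (c i j) :=
    fun i _ => Finset.sum_nonneg fun j _ => Complex.normSq_nonneg _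
  have h2 := (Finset.sum_eq_zero_iff_of_nonneg h1).mp hsum i (Finset.mem_univ i)
  have h3 := (Finset.sum_eq_zero_iff_of_nonneg
    (fun j _ => Complex.normSq_nonneg (c i j))).mp h2 k (Finset.mem_univ k)
  simpa using Complex.normSq_eq_zero.mp h3
end

section
/- Let a be a Hermitian matrix in M_n(ℂ) with distinct eigenvalues λ₁ < ⋯ < λ_n, and let i, j ≥ 1 with i + j − 1 ≤ n. Then λ_i + λ_{i+1} + ⋯ + λ_{i+j−1} = max over projections r of rank ≥ n − i + 1 of (min over projections q ≤ r of rank j of Tr(a q)). -/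
open Matrix Finset

variable {n : ℕ}

lemma card_filter_ico (a b : ℕ) (hb : b ≤ n) :
    (Finset.univ.filter (fun t : Fin n => a ≤ (t : ℕ) ∧ (t : ℕ) < b)).card = b - a := by
  rw [← Nat.card_Ico a b]
  refine Finset.card_bij' (fun t _ => (t : ℕ)) (fun m hm => ⟨m, lt_of_lt_of_le (Finset.mem_Ico.mp hm).2 hb⟩) ?_ ?_ ?_ ?_
  · intro t ht
    simp only [Finset.mem_filter] at ht
    exact Finset.mem_Ico.mpr ⟨ht.2.1, ht.2.2⟩
  · intro m hm
    simp only [Finset.mem_filter, Finset.mem_univ, true_and]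
    exact ⟨(Finset.mem_Ico.mp hm).1, (Finset.mem_Ico.mp hm).2⟩
  · intro t ht; rfl
  · intro m hm; rfl

/-- Lower weight lemma. -/
lemma weight_lower (lam : Fin n → ℝ) (hmono : Monotone lam) (w : Fin n → ℝ)
    (h0 : ∀ t, 0 ≤ w t) (h1 : ∀ t, w t ≤ 1) (i j : ℕ) (hi : 1 ≤ i) (hj : 1 ≤ j)
    (hij : i + j - 1 ≤ n)
    (hsum : ∑ t, w t = j) (hsupp : ∀ t : Fin n, (t : ℕ) + 1 < i → w t = 0) :
    ∑ t ∈ Finset.univ.filter (fun t : Fin n => i ≤ (t : ℕ) + 1 ∧ (t : ℕ) + 1 ≤ i + j - 1), lam t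
      ≤ ∑ t, lam t * w t := by
  have hn : 1 ≤ n := le_trans (by omega) hij
  set T := Finset.univ.filter (fun t : Fin n => i ≤ (t : ℕ) + 1 ∧ (t : ℕ) + 1 ≤ i + j - 1) with hT
  have hTcard : T.card = j := by
    have : T = Finset.univ.filter (fun t : Fin n => i - 1 ≤ (t : ℕ) ∧ (t : ℕ) < i + j - 1) := by
      apply Finset.filter_congr; intro t _; constructor <;> (intro h; omega)
    rw [this, card_filter_ico _ _ hij]; omega
  have hpn : i + j - 2 < n := by omega
  set piv : Fin n := ⟨i + j - 2, hpn⟩ with hpiv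
  have key : ∀ t : Fin n, lam piv * (w t - if t ∈ T then 1 else 0)
      ≤ lam t * w t - (if t ∈ T then 1 else 0) * lam t := by
    intro t
    by_cases htT : t ∈ T
    · simp only [htT, if_pos]
      have hmem := (Finset.mem_filter.mp htT).2
      have hle : lam t ≤ lam piv :=
        hmono (by rw [hpiv, Fin.le_def]; simp only []; omega)
      nlinarith [h1 t]
    · simp only [htT, if_neg, not_false_iff]
      rcases lt_or_ge ((t : ℕ) + 1) i with hc | hc
      · rw [hsupp t hc]; ring_nf; exact le_refl _
      · have hnot : ¬(i ≤ (t : ℕ) + 1 ∧ (t : ℕ) + 1 ≤ i + j - 1) := by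
          simpa [hT] using htT
        have hge : lam piv ≤ lam t :=
          hmono (by rw [hpiv, Fin.le_def]; simp only []; omega)
        nlinarith [h0 t]
  have hsum2 := Finset.sum_le_sum (fun t (_ : t ∈ Finset.univ) => key t)
  rw [← Finset.mul_sum] at hsum2
  have e1 : ∑ t : Fin n, (w t - if t ∈ T then 1 else 0) = 0 := by
    rw [Finset.sum_sub_distrib, hsum, Finset.sum_ite_mem, Finset.univ_inter,
      Finset.sum_const, hTcard]
    simp
  have e2 : ∑ t : Fin n, (lam t * w t - (if t ∈ T then 1 else 0) * lam t)
      = (∑ t, lam t * w t) - ∑ t ∈ T, lam t := by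
    rw [Finset.sum_sub_distrib]
    congr 1
    simp only [ite_mul, one_mul, zero_mul]
    rw [Finset.sum_ite_mem, Finset.univ_inter]
  rw [e1, e2, mul_zero] at hsum2
  linarith

/-- Upper weight lemma. -/
lemma weight_upper (lam : Fin n → ℝ) (hmono : Monotone lam) (w : Fin n → ℝ)
    (h0 : ∀ t, 0 ≤ w t) (h1 : ∀ t, w t ≤ 1) (i j : ℕ) (hi : 1 ≤ i) (hj : 1 ≤ j)
    (hij : i + j - 1 ≤ n)
    (hsum : ∑ t, w t = j) (hsupp : ∀ t : Fin n, i + j - 1 < (t : ℕ) + 1 → w t = 0) :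
    ∑ t, lam t * w t ≤
      ∑ t ∈ Finset.univ.filter (fun t : Fin n => i ≤ (t : ℕ) + 1 ∧ (t : ℕ) + 1 ≤ i + j - 1), lam t := by
  have hn : 1 ≤ n := le_trans (by omega) hij
  set T := Finset.univ.filter (fun t : Fin n => i ≤ (t : ℕ) + 1 ∧ (t : ℕ) + 1 ≤ i + j - 1) with hT
  have hTcard : T.card = j := by
    have : T = Finset.univ.filter (fun t : Fin n => i - 1 ≤ (t : ℕ) ∧ (t : ℕ) < i + j - 1) := by
      apply Finset.filter_congr; intro t _; constructor <;> (intro h; omega)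
    rw [this, card_filter_ico _ _ hij]; omega
  have hpn : i - 1 < n := by omega
  set piv : Fin n := ⟨i - 1, hpn⟩ with hpiv
  have key : ∀ t : Fin n, lam t * w t - (if t ∈ T then 1 else 0) * lam t
      ≤ lam piv * (w t - if t ∈ T then 1 else 0) := by
    intro t
    by_cases htT : t ∈ T
    · simp only [htT, if_pos]
      have hmem := (Finset.mem_filter.mp htT).2
      have hle : lam piv ≤ lam t :=
        hmono (by rw [hpiv, Fin.le_def]; simp only []; omega)
      nlinarith [h1 t]
    · simp only [htT, if_neg, not_false_iff]
      rcases lt_or_ge (i + j - 1) ((t : ℕ) + 1) with hc | hc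
      · rw [hsupp t hc]; ring_nf; exact le_refl _
      · have hnot : ¬(i ≤ (t : ℕ) + 1 ∧ (t : ℕ) + 1 ≤ i + j - 1) := by
          simpa [hT] using htT
        have hge : lam t ≤ lam piv :=
          hmono (by rw [hpiv, Fin.le_def]; simp only []; omega)
        nlinarith [h0 t]
  have hsum2 := Finset.sum_le_sum (fun t (_ : t ∈ Finset.univ) => key t)
  rw [← Finset.mul_sum] at hsum2
  have e1 : ∑ t : Fin n, (w t - if t ∈ T then 1 else 0) = 0 := by
    rw [Finset.sum_sub_distrib, hsum, Finset.sum_ite_mem, Finset.univ_inter,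
      Finset.sum_const, hTcard]
    simp
  have e2 : ∑ t : Fin n, (lam t * w t - (if t ∈ T then 1 else 0) * lam t)
      = (∑ t, lam t * w t) - ∑ t ∈ T, lam t := by
    rw [Finset.sum_sub_distrib]
    congr 1
    simp only [ite_mul, one_mul, zero_mul]
    rw [Finset.sum_ite_mem, Finset.univ_inter]
  rw [e1, e2, mul_zero] at hsum2
  linarith

lemma trace_idem {q : Matrix (Fin n) (Fin n) ℂ} (hq : q * q = q) :
    q.trace = (q.rank : ℂ) := by
  have hmul := congrArg Matrix.mulVecLin hq
  rw [Matrix.mulVecLin_mul] at hmul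
  have hproj : LinearMap.IsProj (LinearMap.range q.mulVecLin) q.mulVecLin := by
    refine ⟨fun x => LinearMap.mem_range_self _ x, ?_⟩
    rintro x ⟨y, rfl⟩
    exact congrFun (congrArg DFunLike.coe hmul) y
  have h1 := hproj.trace
  rw [LinearMap.trace_eq_matrix_trace ℂ (Pi.basisFun ℂ (Fin n)),
    LinearMap.toMatrix_eq_toMatrix'] at h1
  rw [← Matrix.toLin'_apply', LinearMap.toMatrix'_toLin'] at h1
  rw [Matrix.toLin'_apply'] at h1
  simpa [Matrix.rank] using h1

lemma diag_mem {q : Matrix (Fin n) (Fin n) ℂ} (hq : q * q = q) (hherm : q.IsHermitian)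
    (t : Fin n) : (q t t).im = 0 ∧ 0 ≤ (q t t).re ∧ (q t t).re ≤ 1 := by
  have him : (q t t).im = 0 := by
    have := hherm.coe_re_diag
    have h2 : ((q t t).re : ℂ) = q t t := congrFun this t
    simpa [Complex.ext_iff] using h2.symm
  have hdd : q t t = ∑ s, (Complex.normSq (q t s) : ℂ) := by
    conv_lhs => rw [← hq]
    rw [Matrix.mul_apply]
    refine Finset.sum_congr rfl fun s _ => ?_
    have : q s t = starRingEnd ℂ (q t s) := by
      conv_lhs => rw [← hherm]
      simp [Matrix.conjTranspose_apply]
    rw [this, Complex.mul_conj]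
  have hre : (q t t).re = ∑ s, Complex.normSq (q t s) := by
    have := congrArg Complex.re hdd
    simpa using this
  refine ⟨him, ?_, ?_⟩
  · rw [hre]; exact Finset.sum_nonneg fun s _ => Complex.normSq_nonneg _
  · nlinarith [hre, Finset.single_le_sum (f := fun s => Complex.normSq (q t s))
      (fun s _ => Complex.normSq_nonneg _) (Finset.mem_univ t),
      Complex.normSq_apply (q t t), sq_nonneg (q t t).im, him]

lemma exists_orthonormal (W : Submodule ℂ (EuclideanSpace ℂ (Fin n))) (j : ℕ)
    (hj : j ≤ Module.finrank ℂ W) :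
    ∃ v : Fin j → EuclideanSpace ℂ (Fin n), Orthonormal ℂ v ∧ ∀ k, v k ∈ W := by
  have b := stdOrthonormalBasis ℂ W
  refine ⟨fun k => (b (Fin.castLE hj k) : EuclideanSpace ℂ (Fin n)), ?_, fun k => (b _).2⟩
  have h1 : Orthonormal ℂ (fun k : Fin j => b (Fin.castLE hj k)) :=
    b.orthonormal.comp _ (Fin.castLE_injective hj)
  exact h1.comp_linearIsometry W.subtypeₗᵢ

lemma exists_proj (r p : Matrix (Fin n) (Fin n) ℂ) (hr : r * r = r) (hrh : r.IsHermitian)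
    (hp : p * p = p) (hph : p.IsHermitian) (j : ℕ) (hdim : j + n ≤ r.rank + p.rank) :
    ∃ q : Matrix (Fin n) (Fin n) ℂ, q * q = q ∧ q.IsHermitian ∧ q * r = q ∧ q * p = q ∧
      q.rank = j := by
  classical
  set W1 : Submodule ℂ (Fin n → ℂ) := LinearMap.range r.mulVecLin with hW1
  set W2 : Submodule ℂ (Fin n → ℂ) := LinearMap.range p.mulVecLin with hW2
  have hfin : j ≤ Module.finrank ℂ (W1 ⊓ W2 : Submodule ℂ (Fin n → ℂ)) := by
    have h1 := Submodule.finrank_sup_add_finrank_inf_eq W1 W2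
    have h2 : Module.finrank ℂ (W1 ⊔ W2 : Submodule ℂ (Fin n → ℂ)) ≤ n := by
      have := Submodule.finrank_le (W1 ⊔ W2 : Submodule ℂ (Fin n → ℂ))
      simpa using this
    have hr1 : Module.finrank ℂ W1 = r.rank := rfl
    have hr2 : Module.finrank ℂ W2 = p.rank := rfl
    omega
  set e := WithLp.linearEquiv 2 ℂ (Fin n → ℂ) with he
  set W : Submodule ℂ (EuclideanSpace ℂ (Fin n)) := (W1 ⊓ W2).map e.symm.toLinearMap with hW
  have hWrank : Module.finrank ℂ W = Module.finrank ℂ (W1 ⊓ W2 : Submodule ℂ (Fin n → ℂ)) :=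
    LinearEquiv.finrank_map_eq e.symm _
  obtain ⟨v, hv, hvW⟩ := exists_orthonormal W j (hWrank ▸ hfin)
  set vv : Fin j → (Fin n → ℂ) := fun k => e (v k) with hvv
  have hmem : ∀ k, vv k ∈ W1 ⊓ W2 := by
    intro k
    obtain ⟨y, hy, hyk⟩ := Submodule.mem_map.mp (hvW k)
    have h6 : e (v k) = y := by rw [← hyk]; simp
    show e (v k) ∈ W1 ⊓ W2
    rw [h6]; exact hy
  have hfix : ∀ (m : Matrix (Fin n) (Fin n) ℂ), m * m = m →
      ∀ x ∈ LinearMap.range m.mulVecLin, m *ᵥ x = x := by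
    rintro m hm x ⟨y, rfl⟩
    have := congrArg Matrix.mulVecLin hm
    rw [Matrix.mulVecLin_mul] at this
    exact congrFun (congrArg DFunLike.coe this) y
  have hrfix : ∀ k, r *ᵥ vv k = vv k := fun k => hfix r hr _ (hmem k).1
  have hpfix : ∀ k, p *ᵥ vv k = vv k := fun k => hfix p hp _ (hmem k).2
  have horth : ∀ k l, ∑ t, (starRingEnd ℂ) (vv k t) * vv l t = if k = l then 1 else 0 := by
    intro k l
    have := orthonormal_iff_ite.mp hv k l
    simpa [PiLp.inner_apply, RCLike.inner_apply, hvv, he, mul_comm] using this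
  set q : Matrix (Fin n) (Fin n) ℂ :=
    Matrix.of (fun s t => ∑ k, vv k s * (starRingEnd ℂ) (vv k t)) with hqdef
  have hqq : q * q = q := by
    ext s t
    simp only [hqdef, Matrix.mul_apply, Matrix.of_apply, Finset.sum_mul, Finset.mul_sum]
    rw [Finset.sum_comm]
    refine Finset.sum_congr rfl fun k _ => ?_
    rw [Finset.sum_comm]
    have h3 : ∀ l, ∑ u, vv l s * (starRingEnd ℂ) (vv l u) * (vv k u * (starRingEnd ℂ) (vv k t))
        = vv l s * (starRingEnd ℂ) (vv k t) * ∑ u, (starRingEnd ℂ) (vv l u) * vv k u := by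
      intro l
      rw [Finset.mul_sum]
      exact Finset.sum_congr rfl fun u _ => by ring
    simp only [h3, horth]
    simp [mul_ite, Finset.sum_ite_eq']
  have hqh : q.IsHermitian := by
    ext s t
    simp [hqdef, Matrix.conjTranspose_apply, map_sum, _root_.map_mul, mul_comm]
  have habs : ∀ (m : Matrix (Fin n) (Fin n) ℂ), m.IsHermitian → (∀ k, m *ᵥ vv k = vv k) →
      q * m = q := by
    intro m hmh hmfix
    ext s t
    simp only [hqdef, Matrix.mul_apply, Matrix.of_apply, Finset.sum_mul]
    rw [Finset.sum_comm]
    refine Finset.sum_congr rfl fun k _ => ?_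
    have h2 : ∑ u, (starRingEnd ℂ) (vv k u) * m u t = (starRingEnd ℂ) (vv k t) := by
      have h4 : ∀ u, (starRingEnd ℂ) (m u t) = m t u := by
        intro u
        have := congrFun (congrFun hmh.symm t) u
        simp only [Matrix.conjTranspose_apply] at this
        rw [this]
        simp
      calc ∑ u, (starRingEnd ℂ) (vv k u) * m u t
          = (starRingEnd ℂ) (∑ u, vv k u * (starRingEnd ℂ) (m u t)) := by
            rw [map_sum]; exact Finset.sum_congr rfl fun u _ => by simp [_root_.map_mul]
        _ = (starRingEnd ℂ) (∑ u, m t u * vv k u) := by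
            congr 1; exact Finset.sum_congr rfl fun u _ => by rw [h4]; ring
        _ = (starRingEnd ℂ) (vv k t) := by
            congr 1
            have := congrFun (hmfix k) t
            simpa [Matrix.mulVec, dotProduct] using this
    calc ∑ u, vv k s * (starRingEnd ℂ) (vv k u) * m u t
        = vv k s * ∑ u, (starRingEnd ℂ) (vv k u) * m u t := by
          rw [Finset.mul_sum]; exact Finset.sum_congr rfl fun u _ => by ring
      _ = vv k s * (starRingEnd ℂ) (vv k t) := by rw [h2]
  have hqr : q * r = q := habs r hrh hrfix
  have hqp : q * p = q := habs p hph hpfix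
  have htr : q.trace = (j : ℂ) := by
    rw [Matrix.trace]
    simp only [hqdef, Matrix.diag_apply, Matrix.of_apply]
    rw [Finset.sum_comm]
    have : ∀ k, ∑ t, vv k t * (starRingEnd ℂ) (vv k t) = 1 := by
      intro k
      rw [show (∑ t, vv k t * (starRingEnd ℂ) (vv k t))
          = ∑ t, (starRingEnd ℂ) (vv k t) * vv k t from
        Finset.sum_congr rfl fun t _ => mul_comm _ _, horth k k]
      simp
    simp [this]
  have hrank : q.rank = j := by
    have := trace_idem hqq
    rw [htr] at this
    exact_mod_cast this.symm
  exact ⟨q, hqq, hqh, hqr, hqp, hrank⟩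

section Indicators
variable (c c' : Fin n → Prop) [DecidablePred c] [DecidablePred c']

lemma ind_mul (h : ∀ t, c t → c' t) :
    Matrix.diagonal (fun t => if c t then (1 : ℂ) else 0) *
      Matrix.diagonal (fun t => if c' t then (1 : ℂ) else 0) =
    Matrix.diagonal (fun t => if c t then (1 : ℂ) else 0) := by
  rw [Matrix.diagonal_mul_diagonal]
  refine congrArg Matrix.diagonal ?_
  funext t
  by_cases hc : c t
  · simp [hc, h t hc]
  · simp [hc]

lemma ind_idem : Matrix.diagonal (fun t => if c t then (1 : ℂ) else 0) *
      Matrix.diagonal (fun t => if c t then (1 : ℂ) else 0) =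
    Matrix.diagonal (fun t => if c t then (1 : ℂ) else 0) :=
  ind_mul c c (fun _ h => h)

lemma ind_herm : (Matrix.diagonal (fun t => if c t then (1 : ℂ) else 0)).IsHermitian := by
  show _ᴴ = _
  rw [Matrix.diagonal_conjTranspose]
  refine congrArg Matrix.diagonal ?_
  funext t
  by_cases hc : c t <;> simp [hc, Pi.star_apply]

lemma ind_rank : (Matrix.diagonal (fun t => if c t then (1 : ℂ) else 0)).rank
    = (Finset.univ.filter c).card := by
  rw [Matrix.rank_diagonal, Fintype.card_subtype]
  congr 1
  apply Finset.filter_congr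
  intro t _
  by_cases hc : c t <;> simp [hc]

end Indicators

lemma diag_trace_re (lam : Fin n → ℝ) (q : Matrix (Fin n) (Fin n) ℂ) :
    (Matrix.trace (Matrix.diagonal (fun t => (lam t : ℂ)) * q)).re
      = ∑ t, lam t * (q t t).re := by
  rw [Matrix.trace]
  rw [Complex.re_sum]
  refine Finset.sum_congr rfl fun t _ => ?_
  simp [Matrix.diag_apply, Matrix.diagonal_mul, Complex.mul_re]

theorem diag_case (lam : Fin n → ℝ) (hmono : Monotone lam)
    (i j : ℕ) (hi : 1 ≤ i) (hj : 1 ≤ j) (hij : i + j - 1 ≤ n) :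
    IsGreatest {x : ℝ | ∃ r : Matrix (Fin n) (Fin n) ℂ, r * r = r ∧ r.IsHermitian ∧
        n - i + 1 ≤ r.rank ∧
        IsLeast {y : ℝ | ∃ q : Matrix (Fin n) (Fin n) ℂ, q * q = q ∧ q.IsHermitian ∧
          q * r = q ∧ q.rank = j ∧
          y = (Matrix.trace (Matrix.diagonal (fun t => (lam t : ℂ)) * q)).re} x}
      (∑ t ∈ Finset.univ.filter
          (fun t : Fin n => i ≤ (t : ℕ) + 1 ∧ (t : ℕ) + 1 ≤ i + j - 1), lam t) := by
  classical
  have hin : i ≤ n := by omega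
  set D := Matrix.diagonal (fun t => (lam t : ℂ)) with hD
  -- general facts about a q in an inner set
  have inner_facts : ∀ (r q : Matrix (Fin n) (Fin n) ℂ), q * q = q → q.IsHermitian →
      q.rank = j →
      (Matrix.trace (D * q)).re = ∑ t, lam t * (q t t).re
        ∧ (∑ t, (q t t).re) = (j : ℝ)
        ∧ (∀ t, 0 ≤ (q t t).re) ∧ (∀ t, (q t t).re ≤ 1) := by
    intro r q hq hqh hqrank
    refine ⟨diag_trace_re lam q, ?_, fun t => (diag_mem hq hqh t).2.1,
      fun t => (diag_mem hq hqh t).2.2⟩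
    have h1 := trace_idem hq
    rw [hqrank] at h1
    have h2 := congrArg Complex.re h1
    rw [Matrix.trace, Complex.re_sum] at h2
    simpa using h2
  constructor
  · -- membership: witness r₀
    set r₀ := Matrix.diagonal (fun t : Fin n => if i ≤ (t : ℕ) + 1 then (1 : ℂ) else 0) with hr₀
    set q₀ := Matrix.diagonal (fun t : Fin n =>
      if i ≤ (t : ℕ) + 1 ∧ (t : ℕ) + 1 ≤ i + j - 1 then (1 : ℂ) else 0) with hq₀
    refine ⟨r₀, ind_idem _, ind_herm _, ?_, ?_, ?_⟩
    · -- rank r₀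
      rw [hr₀, ind_rank]
      have : (Finset.univ.filter (fun t : Fin n => i ≤ (t : ℕ) + 1)).card = n - (i - 1) := by
        have he : (Finset.univ.filter (fun t : Fin n => i ≤ (t : ℕ) + 1))
            = Finset.univ.filter (fun t : Fin n => i - 1 ≤ (t : ℕ) ∧ (t : ℕ) < n) := by
          apply Finset.filter_congr; intro t _
          constructor
          · intro h; exact ⟨by omega, t.isLt⟩
          · intro h; omega
        rw [he, card_filter_ico _ _ le_rfl]
      omega
    · -- q₀ gives the value
      refine ⟨q₀, ind_idem _, ind_herm _, ind_mul _ _ (fun t h => h.1), ?_, ?_⟩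
      · rw [hq₀, ind_rank]
        have he : (Finset.univ.filter (fun t : Fin n => i ≤ (t : ℕ) + 1 ∧ (t : ℕ) + 1 ≤ i + j - 1))
            = Finset.univ.filter (fun t : Fin n => i - 1 ≤ (t : ℕ) ∧ (t : ℕ) < i + j - 1) := by
          apply Finset.filter_congr; intro t _
          constructor
          · intro h; omega
          · intro h; omega
        rw [he, card_filter_ico _ _ hij]
        omega
      · rw [diag_trace_re]
        rw [Finset.sum_filter]
        refine Finset.sum_congr rfl fun t _ => ?_
        by_cases hc : i ≤ (t : ℕ) + 1 ∧ (t : ℕ) < i + j - 1 <;>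
          simp [hq₀, Matrix.diagonal_apply_eq, hc]
    · -- lower bound of the inner set
      rintro y ⟨q, hq, hqh, hqr, hqrank, rfl⟩
      obtain ⟨htr, hsum, h0, h1⟩ := inner_facts r₀ q hq hqh hqrank
      rw [htr]
      refine weight_lower lam hmono _ h0 h1 i j hi hj hij hsum ?_
      intro t ht
      have h2 := congrFun (congrFun hqr t) t
      rw [Matrix.mul_diagonal] at h2
      rw [if_neg (by omega : ¬ i ≤ (t : ℕ) + 1)] at h2
      rw [mul_zero] at h2
      rw [← h2]
      simp
  · -- upper bound
    rintro x ⟨r, hr, hrh, hrrank, hleast⟩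
    set p := Matrix.diagonal (fun t : Fin n => if (t : ℕ) + 1 ≤ i + j - 1 then (1 : ℂ) else 0)
      with hp
    have hprank : p.rank = i + j - 1 := by
      rw [hp, ind_rank]
      have he : (Finset.univ.filter (fun t : Fin n => (t : ℕ) + 1 ≤ i + j - 1))
          = Finset.univ.filter (fun t : Fin n => 0 ≤ (t : ℕ) ∧ (t : ℕ) < i + j - 1) := by
        apply Finset.filter_congr; intro t _
        constructor
        · intro h; omega
        · intro h; omega
      rw [he, card_filter_ico _ _ hij]
      omega
    obtain ⟨q, hq, hqh, hqr, hqp, hqrank⟩ := exists_proj r p hr hrh (ind_idem _) (ind_herm _) j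
      (by rw [hprank]; omega)
    obtain ⟨htr, hsum, h0, h1⟩ := inner_facts r q hq hqh hqrank
    have hy : (Matrix.trace (D * q)).re ∈ {y : ℝ | ∃ q' : Matrix (Fin n) (Fin n) ℂ,
        q' * q' = q' ∧ q'.IsHermitian ∧ q' * r = q' ∧ q'.rank = j ∧
        y = (Matrix.trace (D * q')).re} := ⟨q, hq, hqh, hqr, hqrank, rfl⟩
    have hxle := hleast.2 hy
    refine le_trans hxle ?_
    rw [htr]
    refine weight_upper lam hmono _ h0 h1 i j hi hj hij hsum ?_
    intro t ht
    have h2 := congrFun (congrFun hqp t) t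
    rw [Matrix.mul_diagonal] at h2
    rw [if_neg (by omega : ¬ (t : ℕ) + 1 ≤ i + j - 1)] at h2
    rw [mul_zero] at h2
    rw [← h2]
    simp

lemma conj_mul_conj (V W a c : Matrix (Fin n) (Fin n) ℂ) (hWV : W * V = 1) :
    (V * a * W) * (V * c * W) = V * (a * c) * W := by
  calc (V * a * W) * (V * c * W)
      = V * (a * ((W * V) * (c * W))) := by simp only [Matrix.mul_assoc]
    _ = V * (a * c) * W := by rw [hWV, Matrix.one_mul]; simp only [Matrix.mul_assoc]

lemma unconj (V W a : Matrix (Fin n) (Fin n) ℂ) (hWV : W * V = 1) :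
    W * (V * a * W) * V = a := by
  calc W * (V * a * W) * V = (W * V) * (a * (W * V)) := by simp only [Matrix.mul_assoc]
    _ = a := by rw [hWV, Matrix.one_mul, Matrix.mul_one]

lemma rank_conj (V W q : Matrix (Fin n) (Fin n) ℂ) (hVW : V * W = 1) (hWV : W * V = 1) :
    (V * q * W).rank = q.rank := by
  have hdV : IsUnit V.det :=
    IsUnit.of_mul_eq_one W.det (by rw [← Matrix.det_mul, hVW, Matrix.det_one])
  have hdW : IsUnit W.det :=
    IsUnit.of_mul_eq_one V.det (by rw [← Matrix.det_mul, hWV, Matrix.det_one])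
  rw [Matrix.rank_mul_eq_left_of_isUnit_det _ _ hdW,
    Matrix.rank_mul_eq_right_of_isUnit_det _ _ hdV]

lemma trace_conj_re (V W b q : Matrix (Fin n) (Fin n) ℂ) (hWV : W * V = 1) :
    Matrix.trace ((V * b * W) * (V * q * W)) = Matrix.trace (b * q) := by
  rw [conj_mul_conj V W b q hWV, Matrix.trace_mul_cycle]
  rw [show W * V * (b * q) = (W * V) * (b * q) from rfl, hWV, Matrix.one_mul]

lemma inner_point (b V W r q : Matrix (Fin n) (Fin n) ℂ) (j : ℕ)
    (hVW : V * W = 1) (hWV : W * V = 1) (hW : W = star V)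
    (hq : q * q = q) (hqh : q.IsHermitian) (hqr : q * r = q) (hqrank : q.rank = j) :
    (V * q * W) * (V * q * W) = V * q * W ∧ (V * q * W).IsHermitian ∧
      (V * q * W) * (V * r * W) = V * q * W ∧ (V * q * W).rank = j ∧
      (Matrix.trace ((V * b * W) * (V * q * W))).re = (Matrix.trace (b * q)).re := by
  refine ⟨?_, ?_, ?_, by rw [rank_conj V W q hVW hWV]; exact hqrank, by rw [trace_conj_re V W b q hWV]⟩
  · rw [conj_mul_conj V W q q hWV, hq]
  · rw [hW, show star V = Vᴴ from rfl]
    exact Matrix.isHermitian_mul_mul_conjTranspose V hqh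
  · rw [conj_mul_conj V W q r hWV, hqr]

lemma outer_conj (b V : Matrix (Fin n) (Fin n) ℂ) (hV1 : star V * V = 1)
    (hV2 : V * star V = 1) (i j : ℕ) (x : ℝ)
    (hx : x ∈ {x : ℝ | ∃ r : Matrix (Fin n) (Fin n) ℂ, r * r = r ∧ r.IsHermitian ∧
        n - i + 1 ≤ r.rank ∧
        IsLeast {y : ℝ | ∃ q : Matrix (Fin n) (Fin n) ℂ, q * q = q ∧ q.IsHermitian ∧
          q * r = q ∧ q.rank = j ∧ y = (Matrix.trace (b * q)).re} x}) :
    x ∈ {x : ℝ | ∃ r : Matrix (Fin n) (Fin n) ℂ, r * r = r ∧ r.IsHermitian ∧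
        n - i + 1 ≤ r.rank ∧
        IsLeast {y : ℝ | ∃ q : Matrix (Fin n) (Fin n) ℂ, q * q = q ∧ q.IsHermitian ∧
          q * r = q ∧ q.rank = j ∧ y = (Matrix.trace ((V * b * star V) * q)).re} x} := by
  obtain ⟨r, hr, hrh, hrrank, hleast⟩ := hx
  set W := star V with hW
  refine ⟨V * r * W, ?_, ?_, ?_, ?_, ?_⟩
  · rw [conj_mul_conj V W r r hV1, hr]
  · rw [hW, show star V = Vᴴ from rfl]
    exact Matrix.isHermitian_mul_mul_conjTranspose V hrh
  · rw [rank_conj V W r hV2 hV1]; exact hrrank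
  · obtain ⟨q, hq, hqh, hqr, hqrank, hval⟩ := hleast.1
    obtain ⟨c1, c2, c3, c4, c5⟩ := inner_point b V W r q j hV2 hV1 hW hq hqh hqr hqrank
    exact ⟨V * q * W, c1, c2, c3, c4, by rw [c5]; exact hval⟩
  · rintro y ⟨q', hq', hq'h, hq'r, hq'rank, rfl⟩
    have hVr : V = star W := by rw [hW, star_star]
    obtain ⟨c1, c2, c3, c4, c5⟩ := inner_point (V * b * W) W V (V * r * W) q' j hV1 hV2 hVr
      hq' hq'h hq'r hq'rank
    rw [unconj V W r hV1] at c3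
    rw [unconj V W b hV1] at c5
    rw [← c5]
    exact hleast.2 ⟨W * q' * V, c1, c2, c3, c4, rfl⟩

theorem stmt_9 {n : ℕ} (a : Matrix (Fin n) (Fin n) ℂ) (ha : a.IsHermitian)
    (lam : Fin n → ℝ) (hlam : StrictMono lam)
    (U : Matrix (Fin n) (Fin n) ℂ) (hU : U ∈ Matrix.unitaryGroup (Fin n) ℂ)
    (hdiag : a = U * Matrix.diagonal (fun i => (lam i : ℂ)) * star U)
    (i j : ℕ) (hi : 1 ≤ i) (hj : 1 ≤ j) (hij : i + j - 1 ≤ n) :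
    IsGreatest {x : ℝ | ∃ r : Matrix (Fin n) (Fin n) ℂ, r * r = r ∧ r.IsHermitian ∧
        n - i + 1 ≤ r.rank ∧
        IsLeast {y : ℝ | ∃ q : Matrix (Fin n) (Fin n) ℂ, q * q = q ∧ q.IsHermitian ∧
          q * r = q ∧ q.rank = j ∧ y = (Matrix.trace (a * q)).re} x}
      (∑ t ∈ Finset.univ.filter
          (fun t : Fin n => i ≤ (t : ℕ) + 1 ∧ (t : ℕ) + 1 ≤ i + j - 1), lam t) := by
  have h1 : star U * U = 1 := (Unitary.mem_iff.mp hU).1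
  have h2 : U * star U = 1 := (Unitary.mem_iff.mp hU).2
  set D := Matrix.diagonal (fun t : Fin n => (lam t : ℂ)) with hD
  have hgD := diag_case lam hlam.monotone i j hi hj hij
  have hset : {x : ℝ | ∃ r : Matrix (Fin n) (Fin n) ℂ, r * r = r ∧ r.IsHermitian ∧
        n - i + 1 ≤ r.rank ∧
        IsLeast {y : ℝ | ∃ q : Matrix (Fin n) (Fin n) ℂ, q * q = q ∧ q.IsHermitian ∧
          q * r = q ∧ q.rank = j ∧ y = (Matrix.trace (a * q)).re} x}
      = {x : ℝ | ∃ r : Matrix (Fin n) (Fin n) ℂ, r * r = r ∧ r.IsHermitian ∧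
        n - i + 1 ≤ r.rank ∧
        IsLeast {y : ℝ | ∃ q : Matrix (Fin n) (Fin n) ℂ, q * q = q ∧ q.IsHermitian ∧
          q * r = q ∧ q.rank = j ∧ y = (Matrix.trace (D * q)).re} x} := by
    ext x
    constructor
    · intro hx
      have h3 : star (star U) * star U = 1 := by rwa [star_star]
      have h4 : star U * star (star U) = 1 := by rwa [star_star]
      have h5 := outer_conj a (star U) h3 h4 i j x hx
      rw [star_star] at h5
      have h6 : star U * a * U = D := by
        rw [hdiag]
        exact unconj U (star U) D h1
      rwa [h6] at h5
    · intro hx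
      have h5 := outer_conj D U h1 h2 i j x hx
      rwa [← hdiag] at h5
  rw [hset]
  exact hgD
end

section
/- Let a, b be Hermitian matrices in M_n(ℂ) with eigenvalues λ₁(a) ≤ ⋯ ≤ λ_n(a), λ₁(b) ≤ ⋯ ≤ λ_n(b), λ₁(a+b) ≤ ⋯ ≤ λ_n(a+b). Then for all k ∈ {1, …, n−1}, Σ_{j=1}^k λ_j(a+b) ≥ Σ_{j=1}^k λ_j(a) + Σ_{j=1}^k λ_j(b), and Σ_{j=1}^n λ_j(a+b) = Σ_{j=1}^n λ_j(a) + Σ_{j=1}^n λ_j(b). -/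
open Matrix

private lemma card_filter_lt' {n k : ℕ} (hk : k ≤ n) :
    (Finset.univ.filter (fun i : Fin n => (i:ℕ) < k)).card = k := by
  apply Finset.card_eq_of_bijective (fun j hj => ⟨j, lt_of_lt_of_le hj hk⟩)
  · intro i hi
    simp only [Finset.mem_filter] at hi
    exact ⟨i, hi.2, rfl⟩
  · intro j hj; simp [hj]
  · intro i j hi hj h
    simpa using congrArg Fin.val h

private lemma sum_filter_le' {n k : ℕ} (hk1 : 1 ≤ k) (hk : k ≤ n) (l : Fin n → ℝ)
    (hl : Monotone l) (c : Fin n → ℝ) (hc0 : ∀ j, 0 ≤ c j) (hc1 : ∀ j, c j ≤ 1)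
    (hsum : ∑ j, c j = k) :
    ∑ i ∈ Finset.univ.filter (fun i : Fin n => (i:ℕ) < k), l i ≤ ∑ j, c j * l j := by
  set t := l ⟨k-1, by omega⟩ with ht
  set d : Fin n → ℝ := fun j => if (j:ℕ) < k then 1 else 0 with hd
  have key : ∀ j : Fin n, 0 ≤ (c j - d j) * (l j - t) := by
    intro j
    rcases lt_or_ge (j:ℕ) k with h | h
    · have h2 : l j ≤ t := hl (by simp only [Fin.le_def]; omega)
      have h3 := hc1 j
      simp only [hd, if_pos h]
      nlinarith
    · have h2 : t ≤ l j := hl (by simp only [Fin.le_def]; omega)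
      have h3 := hc0 j
      simp only [hd, if_neg (not_lt.2 h)]
      nlinarith
  have h0 : (0:ℝ) ≤ ∑ j, (c j - d j) * (l j - t) :=
    Finset.sum_nonneg fun j _ => key j
  have hdsum : ∑ j, d j = (k:ℝ) := by
    rw [hd]
    rw [Finset.sum_boole]
    rw [card_filter_lt' hk]
  have hdl : ∑ j, d j * l j
      = ∑ i ∈ Finset.univ.filter (fun i : Fin n => (i:ℕ) < k), l i := by
    rw [Finset.sum_filter]
    congr 1; ext j
    simp only [hd]
    split <;> simp
  have expand : ∑ j, (c j - d j) * (l j - t)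
      = (∑ j, c j * l j) - (∑ j, d j * l j) - t * (∑ j, c j) + t * (∑ j, d j) := by
    rw [Finset.mul_sum, Finset.mul_sum, ← Finset.sum_sub_distrib, ← Finset.sum_sub_distrib,
      ← Finset.sum_add_distrib]
    congr 1; ext j; ring
  rw [expand, hsum, hdsum, hdl] at h0
  linarith

private lemma keyB' {n : ℕ} (k : ℕ) (hk : k ≤ n) (W : Matrix (Fin n) (Fin n) ℂ)
    (hW1 : star W * W = 1) (hW2 : W * star W = 1) (l : Fin n → ℝ) :
    ∃ c : Fin n → ℝ, (∀ j, 0 ≤ c j) ∧ (∀ j, c j ≤ 1) ∧ (∑ j, c j = k) ∧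
      ∑ i ∈ Finset.univ.filter (fun i : Fin n => (i:ℕ) < k),
        ((W * Matrix.diagonal (fun j => (l j : ℂ)) * star W) i i)
        = ((∑ j, c j * l j : ℝ) : ℂ) := by
  set c : Fin n → ℝ := fun j => ∑ i ∈ Finset.univ.filter (fun i : Fin n => (i:ℕ) < k),
    Complex.normSq (W i j) with hc
  have hentry : ∀ i : Fin n, (W * Matrix.diagonal (fun j => (l j : ℂ)) * star W) i i
      = ∑ j, (Complex.normSq (W i j) : ℂ) * (l j : ℂ) := by
    intro i
    rw [Matrix.mul_apply]
    congr 1; ext j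
    rw [Matrix.mul_diagonal]
    have : (star W) j i = (starRingEnd ℂ) (W i j) := rfl
    rw [this]
    rw [show W i j * (l j : ℂ) * (starRingEnd ℂ) (W i j)
        = W i j * (starRingEnd ℂ) (W i j) * (l j : ℂ) by ring, Complex.mul_conj]
  have hcolnorm : ∀ j : Fin n, ∑ i, Complex.normSq (W i j) = 1 := by
    intro j
    have h := congrFun (congrFun hW1 j) j
    rw [Matrix.mul_apply] at h
    simp only [Matrix.one_apply_eq] at h
    have : ∀ i, (star W) j i * W i j = (Complex.normSq (W i j) : ℂ) := by
      intro i
      have : (star W) j i = (starRingEnd ℂ) (W i j) := rfl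
      rw [this, mul_comm, Complex.mul_conj]
    rw [Finset.sum_congr rfl (fun i _ => this i)] at h
    exact_mod_cast (by push_cast at h ⊢; exact h : ((∑ i, Complex.normSq (W i j) : ℝ) : ℂ) = 1)
  have hrownorm : ∀ i : Fin n, ∑ j, Complex.normSq (W i j) = 1 := by
    intro i
    have h := congrFun (congrFun hW2 i) i
    rw [Matrix.mul_apply] at h
    simp only [Matrix.one_apply_eq] at h
    have : ∀ j, W i j * (star W) j i = (Complex.normSq (W i j) : ℂ) := by
      intro j
      have : (star W) j i = (starRingEnd ℂ) (W i j) := rfl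
      rw [this, Complex.mul_conj]
    rw [Finset.sum_congr rfl (fun j _ => this j)] at h
    exact_mod_cast (by push_cast at h ⊢; exact h : ((∑ j, Complex.normSq (W i j) : ℝ) : ℂ) = 1)
  refine ⟨c, ?_, ?_, ?_, ?_⟩
  · intro j
    exact Finset.sum_nonneg fun i _ => Complex.normSq_nonneg _
  · intro j
    calc c j ≤ ∑ i, Complex.normSq (W i j) :=
          Finset.sum_le_sum_of_subset_of_nonneg (Finset.filter_subset _ _)
            (fun i _ _ => Complex.normSq_nonneg _)
      _ = 1 := hcolnorm j
  · rw [hc]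
    rw [Finset.sum_comm]
    rw [Finset.sum_congr rfl (fun i _ => hrownorm i)]
    simp [card_filter_lt' hk]
  · rw [Finset.sum_congr rfl (fun i _ => hentry i)]
    rw [Finset.sum_comm]
    push_cast
    congr 1; ext j
    rw [hc]
    push_cast
    rw [Finset.sum_mul]

theorem stmt_11 {n : ℕ} (a b : Matrix (Fin n) (Fin n) ℂ)
    (ha : a.IsHermitian) (hb : b.IsHermitian)
    (la lb lab : Fin n → ℝ) (hla : Monotone la) (hlb : Monotone lb) (hlab : Monotone lab)
    (Ua : Matrix (Fin n) (Fin n) ℂ) (hUa : Ua ∈ Matrix.unitaryGroup (Fin n) ℂ)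
    (hdiaga : a = Ua * Matrix.diagonal (fun i => (la i : ℂ)) * star Ua)
    (Ub : Matrix (Fin n) (Fin n) ℂ) (hUb : Ub ∈ Matrix.unitaryGroup (Fin n) ℂ)
    (hdiagb : b = Ub * Matrix.diagonal (fun i => (lb i : ℂ)) * star Ub)
    (Uab : Matrix (Fin n) (Fin n) ℂ) (hUab : Uab ∈ Matrix.unitaryGroup (Fin n) ℂ)
    (hdiagab : a + b = Uab * Matrix.diagonal (fun i => (lab i : ℂ)) * star Uab) :
    (∀ k : ℕ, 1 ≤ k → k ≤ n - 1 →
      ∑ i ∈ Finset.univ.filter (fun i : Fin n => (i : ℕ) < k), la i +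
        ∑ i ∈ Finset.univ.filter (fun i : Fin n => (i : ℕ) < k), lb i ≤
      ∑ i ∈ Finset.univ.filter (fun i : Fin n => (i : ℕ) < k), lab i) ∧
    ∑ i, lab i = ∑ i, la i + ∑ i, lb i := by
  have hUa1 : star Ua * Ua = 1 := hUa.1
  have hUa2 : Ua * star Ua = 1 := hUa.2
  have hUb1 : star Ub * Ub = 1 := hUb.1
  have hUb2 : Ub * star Ub = 1 := hUb.2
  have hUab1 : star Uab * Uab = 1 := hUab.1
  have hUab2 : Uab * star Uab = 1 := hUab.2
  constructor
  · intro k hk1 hk2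
    have hkn : k ≤ n := by omega
    set Wa := star Uab * Ua with hWa
    set Wb := star Uab * Ub with hWb
    have hWa1 : star Wa * Wa = 1 := by
      rw [hWa, Matrix.star_mul, star_star, Matrix.mul_assoc, ← Matrix.mul_assoc Uab, hUab2,
        Matrix.one_mul, hUa1]
    have hWa2 : Wa * star Wa = 1 := by
      rw [hWa, Matrix.star_mul, star_star, Matrix.mul_assoc, ← Matrix.mul_assoc Ua, hUa2,
        Matrix.one_mul, hUab1]
    have hWb1 : star Wb * Wb = 1 := by
      rw [hWb, Matrix.star_mul, star_star, Matrix.mul_assoc, ← Matrix.mul_assoc Uab, hUab2,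
        Matrix.one_mul, hUb1]
    have hWb2 : Wb * star Wb = 1 := by
      rw [hWb, Matrix.star_mul, star_star, Matrix.mul_assoc, ← Matrix.mul_assoc Ub, hUb2,
        Matrix.one_mul, hUab1]
    have hrota : star Uab * a * Uab = Wa * Matrix.diagonal (fun j => (la j : ℂ)) * star Wa := by
      rw [hdiaga, hWa, Matrix.star_mul, star_star]
      simp only [Matrix.mul_assoc]
    have hrotb : star Uab * b * Uab = Wb * Matrix.diagonal (fun j => (lb j : ℂ)) * star Wb := by
      rw [hdiagb, hWb, Matrix.star_mul, star_star]
      simp only [Matrix.mul_assoc]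
    have hrotab : star Uab * (a + b) * Uab = Matrix.diagonal (fun j => (lab j : ℂ)) := by
      rw [hdiagab, Matrix.mul_assoc, Matrix.mul_assoc, hUab1, Matrix.mul_one,
        ← Matrix.mul_assoc, hUab1, Matrix.one_mul]
    obtain ⟨ca, hca0, hca1, hcas, hcaE⟩ := keyB' k hkn Wa hWa1 hWa2 la
    obtain ⟨cb, hcb0, hcb1, hcbs, hcbE⟩ := keyB' k hkn Wb hWb1 hWb2 lb
    have hsplit : ∀ i : Fin n, (star Uab * (a + b) * Uab) i i
        = (star Uab * a * Uab) i i + (star Uab * b * Uab) i i := by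
      intro i
      rw [Matrix.mul_add, Matrix.add_mul]
      rfl
    have hmain : ((∑ i ∈ Finset.univ.filter (fun i : Fin n => (i:ℕ) < k), lab i : ℝ) : ℂ)
        = ((∑ j, ca j * la j : ℝ) : ℂ) + ((∑ j, cb j * lb j : ℝ) : ℂ) := by
      have h1 : ∑ i ∈ Finset.univ.filter (fun i : Fin n => (i:ℕ) < k),
          (star Uab * (a + b) * Uab) i i
          = ((∑ i ∈ Finset.univ.filter (fun i : Fin n => (i:ℕ) < k), lab i : ℝ) : ℂ) := by
        rw [Finset.sum_congr rfl (fun i _ => by rw [hrotab, Matrix.diagonal_apply_eq])]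
        push_cast
        rfl
      have h2 : ∑ i ∈ Finset.univ.filter (fun i : Fin n => (i:ℕ) < k),
          (star Uab * (a + b) * Uab) i i
          = ((∑ j, ca j * la j : ℝ) : ℂ) + ((∑ j, cb j * lb j : ℝ) : ℂ) := by
        rw [Finset.sum_congr rfl (fun i _ => hsplit i), Finset.sum_add_distrib]
        simp only [hrota, hrotb]
        rw [hcaE, hcbE]
      rw [← h1, h2]
    have hmainR : ∑ i ∈ Finset.univ.filter (fun i : Fin n => (i:ℕ) < k), lab i
        = (∑ j, ca j * la j) + (∑ j, cb j * lb j) := by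
      exact_mod_cast hmain
    rw [hmainR]
    gcongr
    · exact sum_filter_le' hk1 hkn la hla ca hca0 hca1 hcas
    · exact sum_filter_le' hk1 hkn lb hlb cb hcb0 hcb1 hcbs
  · have htr : ∀ (U : Matrix (Fin n) (Fin n) ℂ) (l : Fin n → ℝ), star U * U = 1 →
        (U * Matrix.diagonal (fun i => (l i : ℂ)) * star U).trace = ((∑ i, l i : ℝ) : ℂ) := by
      intro U l hU
      rw [Matrix.trace_mul_cycle, hU, Matrix.one_mul, Matrix.trace_diagonal]
      push_cast
      rfl
    have h1 : (a + b).trace = ((∑ i, lab i : ℝ) : ℂ) := by rw [hdiagab]; exact htr _ _ hUab1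
    have h2 : a.trace = ((∑ i, la i : ℝ) : ℂ) := by rw [hdiaga]; exact htr _ _ hUa1
    have h3 : b.trace = ((∑ i, lb i : ℝ) : ℂ) := by rw [hdiagb]; exact htr _ _ hUb1
    have : ((∑ i, lab i : ℝ) : ℂ) = ((∑ i, la i : ℝ) : ℂ) + ((∑ i, lb i : ℝ) : ℂ) := by
      rw [← h1, ← h2, ← h3, Matrix.trace_add]
    exact_mod_cast this
end

section
/- Let M be a von Neumann algebra with faithful normal tracial state τ and let a, b ∈ M be self-adjoint with non-atomic distributions μ_a, μ_b, μ_{a+b}. Then for all s ∈ [0,1), ∫_0^s X_{a+b} dm ≥ ∫_0^s X_a dm + ∫_0^s X_b dm, and ∫_0^1 X_{a+b} dm = ∫_0^1 X_a dm + ∫_0^1 X_b dm = τ(a) + τ(b). In other words, X_a + X_b is majorized by X_{a+b}. -/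
open MeasureTheory

/-- The (left-continuous) distribution function of a measure on `ℝ`. -/
noncomputable def distFun (μ : Measure ℝ) (t : ℝ) : ℝ := (μ (Set.Iio t)).toReal

/-- The quantile function of a measure on `ℝ`. -/
noncomputable def quantileFun (μ : Measure ℝ) (s : ℝ) : ℝ := sInf {t : ℝ | s < distFun μ t}

open Set

namespace Stmt17Aux

variable (ν : Measure ℝ) [IsProbabilityMeasure ν]

lemma distFun_mono : Monotone (distFun ν) := fun s t hst =>
  ENNReal.toReal_mono (measure_ne_top ν _) (measure_mono (Set.Iio_subset_Iio hst))

lemma distFun_le_one (t : ℝ) : distFun ν t ≤ 1 := by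
  have := ENNReal.toReal_mono (by simp) (prob_le_one (μ := ν) (s := Set.Iio t))
  simpa [distFun] using this

variable {R : ℝ}

lemma distFun_eq_one (hR : ν {u : ℝ | R < |u|} = 0) {t : ℝ} (ht : R < t) : distFun ν t = 1 := by
  have h0 : ν (Set.Ici t) = 0 :=
    measure_mono_null (fun u hu => lt_of_lt_of_le ht (le_trans hu (le_abs_self u))) hR
  have := measure_add_measure_compl (μ := ν) (measurableSet_Iio (a := t))
  rw [compl_Iio, h0, add_zero] at this
  simp [distFun, this]

lemma distFun_eq_zero (hR : ν {u : ℝ | R < |u|} = 0) (hR0 : 0 ≤ R) {t : ℝ} (ht : t ≤ -R) : distFun ν t = 0 := by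
  have h0 : ν (Set.Iio t) = 0 := by
    refine measure_mono_null (fun u hu => ?_) hR
    have : u < -R := lt_of_lt_of_le hu ht
    simpa using lt_of_lt_of_le (by linarith) (neg_le_abs u)
  simp [distFun, h0]

lemma q_set_nonempty (hR : ν {u : ℝ | R < |u|} = 0) {s : ℝ} (hs1 : s < 1) : {t : ℝ | s < distFun ν t}.Nonempty :=
  ⟨R + 1, by simp [distFun_eq_one ν hR (lt_add_one R), hs1]⟩

lemma q_set_bddBelow (hR : ν {u : ℝ | R < |u|} = 0) (hR0 : 0 ≤ R) {s : ℝ} (hs0 : 0 ≤ s) :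
    ∀ t ∈ {t : ℝ | s < distFun ν t}, -R ≤ t := by
  intro t ht
  by_contra hc
  push_neg at hc
  rw [Set.mem_setOf_eq, distFun_eq_zero ν hR hR0 hc.le] at ht
  linarith

lemma quantileFun_mem (hR : ν {u : ℝ | R < |u|} = 0) (hR0 : 0 ≤ R) {s : ℝ} (hs0 : 0 ≤ s) (hs1 : s < 1) :
    quantileFun ν s ∈ Set.Icc (-R) R := by
  constructor
  · exact le_csInf (q_set_nonempty ν hR hs1) (q_set_bddBelow ν hR hR0 hs0)
  · have h1 : Set.Ioi R ⊆ {t : ℝ | s < distFun ν t} := fun t ht => by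
      simp [distFun_eq_one ν hR ht, hs1]
    have := csInf_le_csInf ⟨-R, q_set_bddBelow ν hR hR0 hs0⟩ (Set.nonempty_Ioi (a := R)) h1
    simpa [csInf_Ioi, quantileFun] using this

lemma quantileFun_monoOn (hR : ν {u : ℝ | R < |u|} = 0) (hR0 : 0 ≤ R) : MonotoneOn (quantileFun ν) (Set.Ico (0:ℝ) 1) := by
  intro s hs s' hs' hss
  refine csInf_le_csInf ⟨-R, q_set_bddBelow ν hR hR0 hs.1⟩ (q_set_nonempty ν hR hs'.2)
    (fun t ht => lt_of_le_of_lt hss ht)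

lemma exists_lt_distFun {t s : ℝ} (hs : s < distFun ν t) : ∃ t' < t, s < distFun ν t' := by
  have hpos : ∀ n : ℕ, (0:ℝ) < 1/((n:ℝ)+1) := fun n => by positivity
  have hmono : Monotone (fun n : ℕ => Set.Iio (t - 1/((n:ℝ)+1))) := by
    intro m n hmn
    refine Set.Iio_subset_Iio ?_
    have h1 : (1:ℝ)/((n:ℝ)+1) ≤ 1/((m:ℝ)+1) :=
      one_div_le_one_div_of_le (by positivity) (by exact_mod_cast by omega)
    linarith
  have hU : (⋃ n : ℕ, Set.Iio (t - 1/((n:ℝ)+1))) = Set.Iio t := by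
    apply Set.Subset.antisymm
    · exact Set.iUnion_subset fun n => Set.Iio_subset_Iio (sub_le_self _ (hpos n).le)
    · intro x hx
      have htx : 0 < t - x := by simpa [Set.mem_Iio, sub_pos] using hx
      obtain ⟨n, hn⟩ := exists_nat_gt (1/(t - x))
      have h4 : 1 < (n:ℝ) * (t - x) := (div_lt_iff₀ htx).mp hn
      refine Set.mem_iUnion.mpr ⟨n, ?_⟩
      simp only [Set.mem_Iio]
      have h5 : 1/((n:ℝ)+1) < t - x := by
        rw [div_lt_iff₀ (by positivity)]
        nlinarith
      linarith
  have htend := tendsto_measure_iUnion_atTop (μ := ν) hmono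
  rw [hU] at htend
  have htend' : Filter.Tendsto (fun n : ℕ => distFun ν (t - 1/((n:ℝ)+1))) Filter.atTop
      (nhds (distFun ν t)) :=
    (ENNReal.tendsto_toReal (measure_ne_top ν _)).comp htend
  obtain ⟨n, hn⟩ := (htend'.eventually (lt_mem_nhds hs)).exists
  exact ⟨t - 1/((n:ℝ)+1), by linarith [hpos n], hn⟩

lemma exists_distFun_lt [NullSingletonClass ν] {t s : ℝ} (hs : distFun ν t < s) :
    ∃ δ > 0, distFun ν (t + δ) < s := by
  have hpos : ∀ n : ℕ, (0:ℝ) < 1/((n:ℝ)+1) := fun n => by positivity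
  have hanti : Antitone (fun n : ℕ => Set.Iio (t + 1/((n:ℝ)+1))) := by
    intro m n hmn
    refine Set.Iio_subset_Iio ?_
    have h1 : (1:ℝ)/((n:ℝ)+1) ≤ 1/((m:ℝ)+1) :=
      one_div_le_one_div_of_le (by positivity) (by exact_mod_cast by omega)
    linarith
  have hI : (⋂ n : ℕ, Set.Iio (t + 1/((n:ℝ)+1))) = Set.Iic t := by
    apply Set.Subset.antisymm
    · intro x hx
      simp only [Set.mem_iInter, Set.mem_Iio] at hx
      by_contra hc
      have hxt : 0 < x - t := by
        simp only [Set.mem_Iic, not_le] at hc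
        linarith
      obtain ⟨n, hn⟩ := exists_nat_gt (1/(x - t))
      have h4 : 1 < (n:ℝ) * (x - t) := (div_lt_iff₀ hxt).mp hn
      have h5 : 1/((n:ℝ)+1) < x - t := by
        rw [div_lt_iff₀ (by positivity)]
        nlinarith
      linarith [hx n]
    · intro x hx
      refine Set.mem_iInter.mpr fun n => Set.mem_Iio.mpr ?_
      have hx' : x ≤ t := hx
      linarith [hpos n]
  have htend := tendsto_measure_iInter_atTop (μ := ν)
    (fun n => measurableSet_Iio.nullMeasurableSet) hanti ⟨0, measure_ne_top ν _⟩
  rw [hI] at htend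
  have hIic : ν (Set.Iic t) = ν (Set.Iio t) := (measure_congr (Iio_ae_eq_Iic (a := t))).symm
  rw [hIic] at htend
  have htend' : Filter.Tendsto (fun n : ℕ => distFun ν (t + 1/((n:ℝ)+1))) Filter.atTop
      (nhds (distFun ν t)) :=
    (ENNReal.tendsto_toReal (measure_ne_top ν _)).comp htend
  obtain ⟨n, hn⟩ := (htend'.eventually (gt_mem_nhds hs)).exists
  exact ⟨1/((n:ℝ)+1), hpos n, hn⟩

lemma quantileFun_lt (hR : ν {u : ℝ | R < |u|} = 0) (hR0 : 0 ≤ R) {s t : ℝ}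
    (hs0 : 0 ≤ s) (h : s < distFun ν t) : quantileFun ν s < t := by
  obtain ⟨t', ht', h'⟩ := exists_lt_distFun ν h
  exact lt_of_le_of_lt (csInf_le ⟨-R, q_set_bddBelow ν hR hR0 hs0⟩ h') ht'

lemma le_distFun_of_quantileFun_le [NullSingletonClass ν] (hR : ν {u : ℝ | R < |u|} = 0) {s t : ℝ}
    (hs1 : s < 1) (h : quantileFun ν s ≤ t) : s ≤ distFun ν t := by
  by_contra hc
  push_neg at hc
  obtain ⟨δ, hδ, hlt⟩ := exists_distFun_lt ν hc
  have hb : ∀ u ∈ {u : ℝ | s < distFun ν u}, t + δ ≤ u := by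
    intro u hu
    by_contra hcu
    push_neg at hcu
    have := distFun_mono ν hcu.le
    have hu' : s < distFun ν u := hu
    linarith
  have := le_csInf (q_set_nonempty ν hR hs1) hb
  have hq : t + δ ≤ quantileFun ν s := this
  linarith

lemma isProb_restrict : IsProbabilityMeasure ((volume : Measure ℝ).restrict (Set.Ico (0:ℝ) 1)) :=
  ⟨by simp⟩

lemma quantileFun_aemeasurable (hR : ν {u : ℝ | R < |u|} = 0) (hR0 : 0 ≤ R) :
    AEMeasurable (quantileFun ν) ((volume : Measure ℝ).restrict (Set.Ico (0:ℝ) 1)) :=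
  aemeasurable_restrict_of_monotoneOn measurableSet_Ico (quantileFun_monoOn ν hR hR0)

lemma map_quantileFun [NullSingletonClass ν] (hR : ν {u : ℝ | R < |u|} = 0) (hR0 : 0 ≤ R) :
    ((volume : Measure ℝ).restrict (Set.Ico (0:ℝ) 1)).map (quantileFun ν) = ν := by
  have hQae := quantileFun_aemeasurable ν hR hR0
  have hprob := isProb_restrict
  have : IsProbabilityMeasure (((volume : Measure ℝ).restrict (Set.Ico (0:ℝ) 1)).map
      (quantileFun ν)) := Measure.isProbabilityMeasure_map hQae
  refine Measure.ext_of_Iic _ _ (fun t => ?_)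
  rw [Measure.map_apply_of_aemeasurable hQae measurableSet_Iic,
    Measure.restrict_apply' measurableSet_Ico]
  have hF1 : distFun ν t ≤ 1 := distFun_le_one ν t
  have h1 : Set.Ico (0:ℝ) (min (distFun ν t) 1) ⊆ quantileFun ν ⁻¹' Set.Iic t ∩ Set.Ico 0 1 := by
    intro u hu
    obtain ⟨hu0, hu1⟩ := hu
    have hu1' : u < 1 := lt_of_lt_of_le hu1 (min_le_right _ _)
    have huF : u < distFun ν t := lt_of_lt_of_le hu1 (min_le_left _ _)
    exact ⟨le_of_lt (quantileFun_lt ν hR hR0 hu0 huF), hu0, hu1'⟩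
  have h2 : quantileFun ν ⁻¹' Set.Iic t ∩ Set.Ico 0 1 ⊆ Set.Icc (0:ℝ) (min (distFun ν t) 1) := by
    rintro u ⟨hut, hu0, hu1⟩
    exact ⟨hu0, le_min (le_distFun_of_quantileFun_le ν hR hu1 hut) hu1.le⟩
  have hmin0 : 0 ≤ min (distFun ν t) 1 := le_min ENNReal.toReal_nonneg zero_le_one
  have hvol : volume (quantileFun ν ⁻¹' Set.Iic t ∩ Set.Ico 0 1)
      = ENNReal.ofReal (min (distFun ν t) 1) := by
    refine le_antisymm ?_ ?_
    · calc volume (quantileFun ν ⁻¹' Set.Iic t ∩ Set.Ico 0 1)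
          ≤ volume (Set.Icc (0:ℝ) (min (distFun ν t) 1)) := measure_mono h2
        _ = ENNReal.ofReal (min (distFun ν t) 1) := by rw [Real.volume_Icc, sub_zero]
    · calc ENNReal.ofReal (min (distFun ν t) 1)
          = volume (Set.Ico (0:ℝ) (min (distFun ν t) 1)) := by rw [Real.volume_Ico, sub_zero]
        _ ≤ _ := measure_mono h1
  rw [hvol]
  have : min (distFun ν t) 1 = distFun ν t := min_eq_left hF1
  rw [this]
  have hIic : ν (Set.Iic t) = ν (Set.Iio t) := (measure_congr (Iio_ae_eq_Iic (a := t))).symm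
  rw [hIic, distFun, ENNReal.ofReal_toReal (measure_ne_top ν _)]

lemma integral_comp_quantileFun [NullSingletonClass ν] (hR : ν {u : ℝ | R < |u|} = 0) (hR0 : 0 ≤ R)
    {f : ℝ → ℝ} (hf : Continuous f) :
    ∫ u in Set.Ico (0:ℝ) 1, f (quantileFun ν u) = ∫ t, f t ∂ν := by
  conv_rhs => rw [← map_quantileFun ν hR hR0]
  rw [integral_map (quantileFun_aemeasurable ν hR hR0) hf.aestronglyMeasurable]

lemma ae_abs_le (hR : ν {u : ℝ | R < |u|} = 0) : ∀ᵐ t ∂ν, |t| ≤ R := by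
  rw [ae_iff]
  simpa [not_le] using hR

lemma integrable_of_cont (hR : ν {u : ℝ | R < |u|} = 0) {f : ℝ → ℝ} (hf : Continuous f) :
    Integrable f ν := by
  obtain ⟨C, hC⟩ := (isCompact_Icc (a := -R) (b := R)).exists_bound_of_continuousOn
    hf.continuousOn
  refine Integrable.mono' (integrable_const C) hf.aestronglyMeasurable ?_
  filter_upwards [ae_abs_le ν hR] with t ht
  exact hC t (abs_le.mp ht)

lemma quantileFun_integrableOn (hR : ν {u : ℝ | R < |u|} = 0) (hR0 : 0 ≤ R)
    {s : ℝ} (hs : s ≤ 1) :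
    IntegrableOn (quantileFun ν) (Set.Ico (0:ℝ) s) volume := by
  have h1 : IntegrableOn (quantileFun ν) (Set.Ico (0:ℝ) 1) volume := by
    refine Integrable.mono' (integrable_const R)
      (quantileFun_aemeasurable ν hR hR0).aestronglyMeasurable ?_
    refine (ae_restrict_iff' measurableSet_Ico).mpr (Filter.Eventually.of_forall fun u hu => ?_)
    exact abs_le.mpr (quantileFun_mem ν hR hR0 hu.1 hu.2)
  exact h1.mono_set (Set.Ico_subset_Ico le_rfl hs)

lemma comp_quantile_integrableOn (hR : ν {u : ℝ | R < |u|} = 0) (hR0 : 0 ≤ R)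
    {f : ℝ → ℝ} (hf : Continuous f) {s : ℝ} (hs : s ≤ 1) :
    IntegrableOn (fun u => f (quantileFun ν u)) (Set.Ico (0:ℝ) s) volume := by
  have h1 : IntegrableOn (fun u => f (quantileFun ν u)) (Set.Ico (0:ℝ) 1) volume := by
    obtain ⟨C, hC⟩ := (isCompact_Icc (a := -R) (b := R)).exists_bound_of_continuousOn
      hf.continuousOn
    refine Integrable.mono' (integrable_const C)
      (hf.measurable.comp_aemeasurable (quantileFun_aemeasurable ν hR hR0)).aestronglyMeasurable ?_
    refine (ae_restrict_iff' measurableSet_Ico).mpr (Filter.Eventually.of_forall fun u hu => ?_)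
    exact hC _ (quantileFun_mem ν hR hR0 hu.1 hu.2)
  exact h1.mono_set (Set.Ico_subset_Ico le_rfl hs)

lemma integral_quantile_eq [NullSingletonClass ν] (hR : ν {u : ℝ | R < |u|} = 0) (hR0 : 0 ≤ R)
    {s : ℝ} (hs0 : 0 ≤ s) (hs1 : s < 1) :
    ∫ u in Set.Ico (0:ℝ) s, quantileFun ν u
      = s * quantileFun ν s - ∫ t, max (quantileFun ν s - t) 0 ∂ν := by
  set t0 := quantileFun ν s with ht0
  have hcont : Continuous (fun t : ℝ => max (t0 - t) 0) :=
    (continuous_const.sub continuous_id).max continuous_const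
  rw [← integral_comp_quantileFun ν hR hR0 hcont]
  have hsplit : Set.Ico (0:ℝ) 1 = Set.Ico 0 s ∪ Set.Ico s 1 :=
    (Set.Ico_union_Ico_eq_Ico hs0 hs1.le).symm
  have hint1 : IntegrableOn (fun u => max (t0 - quantileFun ν u) 0) (Set.Ico (0:ℝ) s) volume :=
    comp_quantile_integrableOn ν hR hR0 hcont hs1.le
  have hint2 : IntegrableOn (fun u => max (t0 - quantileFun ν u) 0) (Set.Ico s 1) volume := by
    have := comp_quantile_integrableOn ν hR hR0 hcont (le_refl 1)
    exact this.mono_set (Set.Ico_subset_Ico hs0 le_rfl)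
  rw [hsplit, setIntegral_union (Set.Ico_disjoint_Ico_same)
    measurableSet_Ico hint1 hint2]
  have hzero : ∫ u in Set.Ico s 1, max (t0 - quantileFun ν u) 0 = 0 := by
    rw [setIntegral_congr_fun measurableSet_Ico (g := fun _ => (0:ℝ)) ?_, integral_zero]
    intro u hu
    have : t0 ≤ quantileFun ν u :=
      quantileFun_monoOn ν hR hR0 ⟨hs0, hs1⟩ ⟨hs0.trans hu.1, hu.2⟩ hu.1
    simp only [max_eq_right (by linarith : t0 - quantileFun ν u ≤ 0)]
  have hfirst : ∫ u in Set.Ico (0:ℝ) s, max (t0 - quantileFun ν u) 0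
      = ∫ u in Set.Ico (0:ℝ) s, (t0 - quantileFun ν u) := by
    refine setIntegral_congr_fun measurableSet_Ico fun u hu => ?_
    have : quantileFun ν u ≤ t0 :=
      quantileFun_monoOn ν hR hR0 ⟨hu.1, hu.2.trans hs1⟩ ⟨hs0, hs1⟩ hu.2.le
    exact max_eq_left (by linarith)
  have hQint := quantileFun_integrableOn ν hR hR0 hs1.le
  have hconst : IntegrableOn (fun _ : ℝ => t0) (Set.Ico (0:ℝ) s) volume := (integrableOn_const_iff).mpr
    (Or.inr (by rw [Real.volume_Ico]; exact ENNReal.ofReal_lt_top))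
  have hsub : ∫ u in Set.Ico (0:ℝ) s, (t0 - quantileFun ν u)
      = s * t0 - ∫ u in Set.Ico (0:ℝ) s, quantileFun ν u := by
    rw [integral_sub hconst hQint, setIntegral_const, Real.volume_real_Ico, sub_zero,
      max_eq_left hs0, smul_eq_mul]
  rw [hzero, hfirst, hsub]
  ring

lemma integral_quantile_ge [NullSingletonClass ν] (hR : ν {u : ℝ | R < |u|} = 0) (hR0 : 0 ≤ R)
    {s : ℝ} (hs0 : 0 ≤ s) (hs1 : s < 1) (t : ℝ) :
    s * t - ∫ l, max (t - l) 0 ∂ν ≤ ∫ u in Set.Ico (0:ℝ) s, quantileFun ν u := by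
  have hcont : Continuous (fun l : ℝ => max (t - l) 0) :=
    (continuous_const.sub continuous_id).max continuous_const
  rw [← integral_comp_quantileFun ν hR hR0 hcont]
  have hint1 : IntegrableOn (fun u => max (t - quantileFun ν u) 0) (Set.Ico (0:ℝ) s) volume :=
    comp_quantile_integrableOn ν hR hR0 hcont hs1.le
  have hintfull : IntegrableOn (fun u => max (t - quantileFun ν u) 0) (Set.Ico (0:ℝ) 1) volume :=
    comp_quantile_integrableOn ν hR hR0 hcont le_rfl
  have hQint := quantileFun_integrableOn ν hR hR0 hs1.le
  have hconst : IntegrableOn (fun _ : ℝ => t) (Set.Ico (0:ℝ) s) volume := (integrableOn_const_iff).mpr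
    (Or.inr (by rw [Real.volume_Ico]; exact ENNReal.ofReal_lt_top))
  have h1 : ∫ u in Set.Ico (0:ℝ) s, (t - max (t - quantileFun ν u) 0)
      ≤ ∫ u in Set.Ico (0:ℝ) s, quantileFun ν u := by
    refine setIntegral_mono_on (hconst.sub hint1) hQint measurableSet_Ico fun u _ => ?_
    have := le_max_left (t - quantileFun ν u) 0
    linarith
  have h2 : ∫ u in Set.Ico (0:ℝ) s, (t - max (t - quantileFun ν u) 0)
      = s * t - ∫ u in Set.Ico (0:ℝ) s, max (t - quantileFun ν u) 0 := by
    rw [integral_sub hconst hint1, setIntegral_const, Real.volume_real_Ico, sub_zero,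
      max_eq_left hs0, smul_eq_mul]
  have h3 : ∫ u in Set.Ico (0:ℝ) s, max (t - quantileFun ν u) 0
      ≤ ∫ u in Set.Ico (0:ℝ) 1, max (t - quantileFun ν u) 0 := by
    refine setIntegral_mono_set hintfull ?_ ?_
    · exact Filter.Eventually.of_forall fun u => le_max_right _ _
    · exact (Set.Ico_subset_Ico le_rfl hs1.le).eventuallyLE
  linarith

end Stmt17Aux

namespace Stmt17Aux
open Polynomial

section Op
variable {M : Type*} [CStarAlgebra M]

lemma tau_pair (τ : M →ₗ[ℂ] ℂ)
    (hτtrace : ∀ x y : M, τ (x * y) = τ (y * x))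
    (hτpos : ∀ x : M, 0 ≤ (τ (star x * x)).re ∧ (τ (star x * x)).im = 0)
    {x w : M} (hx : IsSelfAdjoint x) (hw : IsSelfAdjoint w)
    {f g : ℝ → ℝ} (hf : Continuous f) (hg : Continuous g)
    (hf0 : ∀ t, 0 ≤ f t) (hg0 : ∀ t, 0 ≤ g t) :
    0 ≤ (τ (cfc f x * cfc g w)).re := by
  set r := cfc (fun t => Real.sqrt (f t)) x with hr
  set d := cfc (fun t => Real.sqrt (g t)) w with hd
  have hrsa : IsSelfAdjoint r := cfc_predicate _ x
  have hdsa : IsSelfAdjoint d := cfc_predicate _ w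
  have hrr : r * r = cfc f x := by
    rw [hr, ← cfc_mul _ _ x (by fun_prop) (by fun_prop)]
    exact cfc_congr fun t _ => Real.mul_self_sqrt (hf0 t)
  have hdd : d * d = cfc g w := by
    rw [hd, ← cfc_mul _ _ w (by fun_prop) (by fun_prop)]
    exact cfc_congr fun t _ => Real.mul_self_sqrt (hg0 t)
  have key : cfc f x * cfc g w = r * (r * (d * d)) := by
    rw [← hrr, ← hdd]; noncomm_ring
  have heq : τ (cfc f x * cfc g w) = τ (star (d * r) * (d * r)) := by
    rw [key, hτtrace r (r * (d * d))]
    congr 1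
    rw [star_mul, hrsa.star_eq, hdsa.star_eq]
    noncomm_ring
  rw [heq]
  exact (hτpos (d * r)).1

lemma tau_mul_le (τ : M →ₗ[ℂ] ℂ)
    (hτtrace : ∀ x y : M, τ (x * y) = τ (y * x))
    (hτpos : ∀ x : M, 0 ≤ (τ (star x * x)).re ∧ (τ (star x * x)).im = 0)
    {x w : M} (hx : IsSelfAdjoint x) (hw : IsSelfAdjoint w)
    {f g : ℝ → ℝ} (hf : Continuous f) (hg : Continuous g)
    (hg0 : ∀ t, 0 ≤ g t) (hg1 : ∀ t, g t ≤ 1) :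
    (τ (cfc f x * cfc g w)).re ≤ (τ (cfc (fun t => max (f t) 0) x)).re := by
  have hp : Continuous (fun t : ℝ => max (f t) 0) := hf.max continuous_const
  have hm : Continuous (fun t : ℝ => max (-f t) 0) := hf.neg.max continuous_const
  have hsub : cfc f x = cfc (fun t => max (f t) 0) x - cfc (fun t => max (-f t) 0) x := by
    rw [← cfc_sub _ _ x (by fun_prop) (by fun_prop)]
    refine cfc_congr fun t _ => ?_
    rcases le_total (f t) 0 with h | h
    · rw [max_eq_right h, max_eq_left (by linarith : (0:ℝ) ≤ -f t)]; ring
    · rw [max_eq_left h, max_eq_right (by linarith : -f t ≤ 0)]; ring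
  have h1 : 0 ≤ (τ (cfc (fun t => max (-f t) 0) x * cfc g w)).re :=
    tau_pair τ hτtrace hτpos hx hw hm hg (fun t => le_max_right _ _) hg0
  have h2 : 0 ≤ (τ (cfc (fun t => max (f t) 0) x * cfc (fun t => 1 - g t) w)).re :=
    tau_pair τ hτtrace hτpos hx hw hp (continuous_const.sub hg)
      (fun t => le_max_right _ _) (fun t => by linarith [hg1 t])
  have hone : cfc (fun _ : ℝ => (1:ℝ)) w = 1 := by
    rw [cfc_const 1 w, map_one]
  have hsplit : cfc (fun t => 1 - g t) w = 1 - cfc g w := by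
    rw [cfc_sub _ _ w (by fun_prop) (by fun_prop), hone]
  have h2' : (τ (cfc (fun t => max (f t) 0) x * cfc g w)).re
      ≤ (τ (cfc (fun t => max (f t) 0) x)).re := by
    have hexp : cfc (fun t => max (f t) 0) x * (1 - cfc g w)
        = cfc (fun t => max (f t) 0) x - cfc (fun t => max (f t) 0) x * cfc g w := by
      noncomm_ring
    rw [hsplit, hexp, map_sub] at h2
    rw [Complex.sub_re] at h2
    linarith
  have hexp2 : τ (cfc f x * cfc g w)
      = τ (cfc (fun t => max (f t) 0) x * cfc g w)
        - τ (cfc (fun t => max (-f t) 0) x * cfc g w) := by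
    rw [← map_sub, ← sub_mul, ← hsub]
  rw [hexp2, Complex.sub_re]
  linarith

lemma tau_cfc_eq [Nontrivial M] (τ : M →ₗ[ℂ] ℂ) (hτcont : Continuous τ)
    {x : M} (hx : IsSelfAdjoint x) (ν : Measure ℝ) [IsProbabilityMeasure ν]
    {R : ℝ} (hR0 : 0 ≤ R) (hRx : ‖x‖ ≤ R) (hRν : ν {u : ℝ | R < |u|} = 0)
    (hmom : ∀ m : ℕ, τ (x ^ m) = ((∫ t, t ^ m ∂ν : ℝ) : ℂ))
    {f : ℝ → ℝ} (hf : Continuous f) :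
    τ (cfc f x) = ((∫ t, f t ∂ν : ℝ) : ℂ) := by
  obtain ⟨C, hCpos, hC⟩ := SemilinearMapClass.bound_of_continuous τ hτcont
  have hpoly : ∀ p : ℝ[X], τ (aeval x p) = ((∫ t, p.eval t ∂ν : ℝ) : ℂ) := by
    intro p
    rw [aeval_eq_sum_range, map_sum]
    have hterm : ∀ i, τ (p.coeff i • x ^ i) = ((p.coeff i * ∫ t, t ^ i ∂ν : ℝ) : ℂ) := by
      intro i
      have hsmul : p.coeff i • x ^ i = ((p.coeff i : ℂ)) • x ^ i :=
        (Complex.coe_smul (p.coeff i) (x ^ i)).symm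
      rw [hsmul, LinearMap.map_smul, hmom i, smul_eq_mul, ← Complex.ofReal_mul]
    rw [Finset.sum_congr rfl fun i _ => hterm i, ← Complex.ofReal_sum]
    congr 1
    have hint : ∀ i : ℕ, Integrable (fun t : ℝ => p.coeff i * t ^ i) ν :=
      fun i => (integrable_of_cont ν hRν (by fun_prop)).const_mul _
    calc ∑ i ∈ Finset.range (p.natDegree + 1), p.coeff i * ∫ t, t ^ i ∂ν
        = ∑ i ∈ Finset.range (p.natDegree + 1), ∫ t, p.coeff i * t ^ i ∂ν := by
          refine Finset.sum_congr rfl fun i _ => ?_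
          rw [integral_const_mul]
      _ = ∫ t, ∑ i ∈ Finset.range (p.natDegree + 1), p.coeff i * t ^ i ∂ν := by
          rw [integral_finset_sum _ (fun i _ => hint i)]
      _ = ∫ t, p.eval t ∂ν := by
          refine integral_congr_ae (Filter.Eventually.of_forall fun t => ?_)
          exact (Polynomial.eval_eq_sum_range (p := p) t).symm
  have hfint : Integrable f ν := integrable_of_cont ν hRν hf
  have key : ∀ ε : ℝ, 0 < ε → ‖τ (cfc f x) - ((∫ t, f t ∂ν : ℝ) : ℂ)‖ ≤ (C + 1) * ε := by
    intro ε hε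
    obtain ⟨p, hpnear⟩ := exists_polynomial_near_of_continuousOn (-R) R f
      hf.continuousOn ε hε
    have hspec : ∀ t ∈ spectrum ℝ x, t ∈ Set.Icc (-R) R := by
      intro t ht
      have := spectrum.norm_le_norm_of_mem ht
      rw [Real.norm_eq_abs] at this
      exact abs_le.mp (this.trans hRx)
    have h1 : ‖τ (cfc f x) - τ (aeval x p)‖ ≤ C * ε := by
      rw [← cfc_polynomial p x, ← map_sub, ← cfc_sub _ _ x hf.continuousOn
        p.continuous.continuousOn]
      calc ‖τ (cfc (fun t => f t - p.eval t) x)‖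
          ≤ C * ‖cfc (fun t => f t - p.eval t) x‖ := hC _
        _ ≤ C * ε := by
            refine mul_le_mul_of_nonneg_left ?_ hCpos.le
            refine norm_cfc_le hε.le fun t ht => ?_
            rw [Real.norm_eq_abs, abs_sub_comm]
            exact (hpnear t (hspec t ht)).le
    have h2 : ‖((∫ t, p.eval t ∂ν : ℝ) : ℂ) - ((∫ t, f t ∂ν : ℝ) : ℂ)‖ ≤ ε := by
      rw [← Complex.ofReal_sub, Complex.norm_real,
        ← integral_sub (integrable_of_cont ν hRν p.continuous) hfint]
      have hb : ∀ᵐ t ∂ν, ‖p.eval t - f t‖ ≤ ε := by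
        filter_upwards [ae_abs_le ν hRν] with t ht
        rw [Real.norm_eq_abs]
        exact (hpnear t (abs_le.mp ht)).le
      have := norm_integral_le_of_norm_le_const (C := ε) hb
      simpa using this
    calc ‖τ (cfc f x) - ((∫ t, f t ∂ν : ℝ) : ℂ)‖
        = ‖(τ (cfc f x) - τ (aeval x p))
            + (((∫ t, p.eval t ∂ν : ℝ) : ℂ) - ((∫ t, f t ∂ν : ℝ) : ℂ))‖ := by
          rw [hpoly p]; ring_nf
      _ ≤ ‖τ (cfc f x) - τ (aeval x p)‖
            + ‖((∫ t, p.eval t ∂ν : ℝ) : ℂ) - ((∫ t, f t ∂ν : ℝ) : ℂ)‖ := norm_add_le _ _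
      _ ≤ C * ε + ε := add_le_add h1 h2
      _ = (C + 1) * ε := by ring
  have hzero : ‖τ (cfc f x) - ((∫ t, f t ∂ν : ℝ) : ℂ)‖ ≤ 0 := by
    refine le_of_forall_pos_le_add fun ε hε => ?_
    have h := key (ε / (C + 1)) (by positivity)
    calc ‖τ (cfc f x) - ((∫ t, f t ∂ν : ℝ) : ℂ)‖ ≤ (C + 1) * (ε / (C + 1)) := h
      _ = ε := by field_simp
      _ = 0 + ε := by ring
  have := le_antisymm hzero (norm_nonneg _)
  rwa [norm_eq_zero, sub_eq_zero] at this

lemma key_ineq [Nontrivial M] (τ : M →ₗ[ℂ] ℂ)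
    (hτtrace : ∀ x y : M, τ (x * y) = τ (y * x))
    (hτpos : ∀ x : M, 0 ≤ (τ (star x * x)).re ∧ (τ (star x * x)).im = 0)
    (hτcont : Continuous τ)
    {a b : M} (ha : IsSelfAdjoint a) (hb : IsSelfAdjoint b)
    (μa μb μab : Measure ℝ)
    [IsProbabilityMeasure μa] [IsProbabilityMeasure μb] [IsProbabilityMeasure μab]
    {Ra Rb Rab : ℝ} (hRa0 : 0 ≤ Ra) (hRb0 : 0 ≤ Rb) (hRab0 : 0 ≤ Rab)
    (hRax : ‖a‖ ≤ Ra) (hRbx : ‖b‖ ≤ Rb) (hRabx : ‖a + b‖ ≤ Rab)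
    (hRaν : μa {u : ℝ | Ra < |u|} = 0) (hRbν : μb {u : ℝ | Rb < |u|} = 0)
    (hRabν : μab {u : ℝ | Rab < |u|} = 0)
    (hμa : ∀ m : ℕ, τ (a ^ m) = ((∫ t, t ^ m ∂μa : ℝ) : ℂ))
    (hμb : ∀ m : ℕ, τ (b ^ m) = ((∫ t, t ^ m ∂μb : ℝ) : ℂ))
    (hμab : ∀ m : ℕ, τ ((a + b) ^ m) = ((∫ t, t ^ m ∂μab : ℝ) : ℂ))
    (ta tb : ℝ) :
    ∫ l, max (ta + tb - l) 0 ∂μab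
      ≤ (∫ l, max (ta - l) 0 ∂μa) + ∫ l, max (tb - l) 0 ∂μb := by
  have hab : IsSelfAdjoint (a + b) := ha.add hb
  refine le_of_forall_pos_le_add fun ε hε => ?_
  set t := ta + tb with ht
  set gε : ℝ → ℝ := fun u => min 1 (max (u/ε) 0) with hgdef
  have hgc : Continuous gε := by
    rw [hgdef]; fun_prop
  have hg0 : ∀ u, 0 ≤ gε u := fun u => le_min zero_le_one (le_max_right _ _)
  have hg1 : ∀ u, gε u ≤ 1 := fun u => min_le_left _ _
  have hpt : ∀ u : ℝ, max u 0 - ε ≤ u * gε u := by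
    intro u
    rcases le_or_gt u 0 with h | h
    · have hgu : gε u = 0 := by
        rw [hgdef]
        simp only
        rw [max_eq_right (div_nonpos_iff.mpr (Or.inr ⟨h, hε.le⟩))]
        simp
      rw [hgu, max_eq_right h, mul_zero]
      linarith
    rcases le_or_gt u ε with h2 | h2
    · have hgu : gε u = u/ε := by
        rw [hgdef]
        simp only
        rw [max_eq_left (by positivity : (0:ℝ) ≤ u/ε),
          min_eq_right ((div_le_one hε).mpr h2)]
      rw [hgu, max_eq_left h.le, mul_div_assoc']
      rw [le_div_iff₀ hε]
      nlinarith [sq_nonneg (u - ε)]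
    · have hgu : gε u = 1 := by
        rw [hgdef]
        simp only
        exact min_eq_left (le_max_of_le_left ((one_le_div hε).mpr h2.le))
      rw [hgu, max_eq_left h.le, mul_one]
      linarith
  have hcsub : Continuous (fun l : ℝ => t - l) := continuous_const.sub continuous_id
  have hgcomp : Continuous (fun l : ℝ => gε (t - l)) := hgc.comp hcsub
  have hprod : Continuous (fun l : ℝ => (t - l) * gε (t - l)) := hcsub.mul hgcomp
  have hmaxc : ∀ c : ℝ, Continuous (fun l : ℝ => max (c - l) 0) :=
    fun c => (continuous_const.sub continuous_id).max continuous_const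
  have hint1 : Integrable (fun l => max (t - l) 0) μab := integrable_of_cont μab hRabν (hmaxc t)
  have hint2 : Integrable (fun l => (t - l) * gε (t - l)) μab :=
    integrable_of_cont μab hRabν hprod
  have hstep1 : ∫ l, max (t - l) 0 ∂μab ≤ (∫ l, (t - l) * gε (t - l) ∂μab) + ε := by
    have h := integral_mono (f := fun l => max (t - l) 0 - ε)
      (g := fun l => (t - l) * gε (t - l)) (hint1.sub (integrable_const ε)) hint2
      (fun l => by simpa using hpt (t - l))
    rw [integral_sub hint1 (integrable_const ε), integral_const] at h
    simp only [probReal_univ, smul_eq_mul, one_mul] at h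
    linarith
  have hcfc_prod : τ (cfc (fun l => (t - l) * gε (t - l)) (a + b))
      = ((∫ l, (t - l) * gε (t - l) ∂μab : ℝ) : ℂ) :=
    tau_cfc_eq τ hτcont hab μab hRab0 hRabx hRabν hμab hprod
  have hsplitmul : cfc (fun l => (t - l) * gε (t - l)) (a + b)
      = cfc (fun l : ℝ => t - l) (a + b) * cfc (fun l => gε (t - l)) (a + b) :=
    cfc_mul _ _ (a + b) hcsub.continuousOn hgcomp.continuousOn
  have hconst_sub : ∀ (x : M), IsSelfAdjoint x → ∀ c : ℝ,
      cfc (fun l : ℝ => c - l) x = algebraMap ℝ M c - x := by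
    intro x hx c
    rw [cfc_sub _ _ x (by fun_prop) (by fun_prop), cfc_const c x, cfc_id' ℝ x]
  have hZ : cfc (fun l : ℝ => t - l) (a + b)
      = cfc (fun l : ℝ => ta - l) a + cfc (fun l : ℝ => tb - l) b := by
    rw [hconst_sub _ hab t, hconst_sub _ ha ta, hconst_sub _ hb tb, ht, map_add]
    abel
  have hXa := tau_mul_le τ hτtrace hτpos ha hab
    (f := fun l : ℝ => ta - l) (g := fun l => gε (t - l))
    (continuous_const.sub continuous_id) hgcomp (fun l => hg0 _) (fun l => hg1 _)
  have hXb := tau_mul_le τ hτtrace hτpos hb hab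
    (f := fun l : ℝ => tb - l) (g := fun l => gε (t - l))
    (continuous_const.sub continuous_id) hgcomp (fun l => hg0 _) (fun l => hg1 _)
  have hPa : τ (cfc (fun l : ℝ => max (ta - l) 0) a) = ((∫ l, max (ta - l) 0 ∂μa : ℝ) : ℂ) :=
    tau_cfc_eq τ hτcont ha μa hRa0 hRax hRaν hμa (hmaxc ta)
  have hPb : τ (cfc (fun l : ℝ => max (tb - l) 0) b) = ((∫ l, max (tb - l) 0 ∂μb : ℝ) : ℂ) :=
    tau_cfc_eq τ hτcont hb μb hRb0 hRbx hRbν hμb (hmaxc tb)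
  rw [hPa] at hXa
  rw [hPb] at hXb
  rw [Complex.ofReal_re] at hXa hXb
  have hsum : (τ (cfc (fun l => (t - l) * gε (t - l)) (a + b))).re
      ≤ (∫ l, max (ta - l) 0 ∂μa) + ∫ l, max (tb - l) 0 ∂μb := by
    rw [hsplitmul, hZ, add_mul, map_add, Complex.add_re]
    exact add_le_add hXa hXb
  rw [hcfc_prod, Complex.ofReal_re] at hsum
  linarith

end Op

end Stmt17Aux

open Stmt17Aux in
theorem stmt_17 {M : Type*} [NormedRing M] [StarRing M] [CStarRing M]
    [NormedAlgebra ℂ M] [CompleteSpace M] [StarModule ℂ M]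
    (τ : M →ₗ[ℂ] ℂ) (hτ1 : τ 1 = 1)
    (hτtrace : ∀ x y : M, τ (x * y) = τ (y * x))
    (hτpos : ∀ x : M, 0 ≤ (τ (star x * x)).re ∧ (τ (star x * x)).im = 0)
    (hτfaithful : ∀ x : M, τ (star x * x) = 0 → x = 0)
    (hτcont : Continuous τ)
    (a b : M) (ha : star a = a) (hb : star b = b)
    -- the distributions of `a`, `b` and `a + b`
    (μa μb μab : Measure ℝ)
    [IsProbabilityMeasure μa] [IsProbabilityMeasure μb] [IsProbabilityMeasure μab]
    [NullSingletonClass μa] [NullSingletonClass μb] [NullSingletonClass μab]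
    (hμacpt : ∃ R : ℝ, μa {t : ℝ | R < |t|} = 0)
    (hμbcpt : ∃ R : ℝ, μb {t : ℝ | R < |t|} = 0)
    (hμabcpt : ∃ R : ℝ, μab {t : ℝ | R < |t|} = 0)
    (hμa : ∀ m : ℕ, τ (a ^ m) = ((∫ t, t ^ m ∂μa : ℝ) : ℂ))
    (hμb : ∀ m : ℕ, τ (b ^ m) = ((∫ t, t ^ m ∂μb : ℝ) : ℂ))
    (hμab : ∀ m : ℕ, τ ((a + b) ^ m) = ((∫ t, t ^ m ∂μab : ℝ) : ℂ)) :
    (∀ s ∈ Set.Ico (0 : ℝ) 1,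
      (∫ u in Set.Ico (0 : ℝ) s, quantileFun μa u) +
        (∫ u in Set.Ico (0 : ℝ) s, quantileFun μb u) ≤
      ∫ u in Set.Ico (0 : ℝ) s, quantileFun μab u) ∧
    (∫ u in Set.Ico (0 : ℝ) 1, quantileFun μab u) =
      (∫ u in Set.Ico (0 : ℝ) 1, quantileFun μa u) +
        (∫ u in Set.Ico (0 : ℝ) 1, quantileFun μb u) ∧
    (∫ u in Set.Ico (0 : ℝ) 1, quantileFun μab u) = (τ a).re + (τ b).re := by
  have hnt : Nontrivial M := nontrivial_of_ne 1 0 fun h => by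
    rw [h, map_zero] at hτ1; exact one_ne_zero hτ1.symm
  letI : CStarAlgebra M :=
    { toNormedRing := inferInstance, toStarRing := inferInstance,
      toCompleteSpace := inferInstance, toCStarRing := inferInstance,
      toNormedAlgebra := inferInstance, toStarModule := inferInstance }
  have haSA : IsSelfAdjoint a := ha
  have hbSA : IsSelfAdjoint b := hb
  obtain ⟨Ra0, hRa0⟩ := hμacpt
  obtain ⟨Rb0, hRb0⟩ := hμbcpt
  obtain ⟨Rab0, hRab0⟩ := hμabcpt
  set Ra := max (max Ra0 ‖a‖) 0 with hRadef
  set Rb := max (max Rb0 ‖b‖) 0 with hRbdef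
  set Rab := max (max Rab0 ‖a + b‖) 0 with hRabdef
  have hRa : μa {u : ℝ | Ra < |u|} = 0 :=
    measure_mono_null (fun u hu =>
      lt_of_le_of_lt ((le_max_left Ra0 ‖a‖).trans (le_max_left _ 0)) hu) hRa0
  have hRb : μb {u : ℝ | Rb < |u|} = 0 :=
    measure_mono_null (fun u hu =>
      lt_of_le_of_lt ((le_max_left Rb0 ‖b‖).trans (le_max_left _ 0)) hu) hRb0
  have hRab : μab {u : ℝ | Rab < |u|} = 0 :=
    measure_mono_null (fun u hu =>
      lt_of_le_of_lt ((le_max_left Rab0 ‖a + b‖).trans (le_max_left _ 0)) hu) hRab0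
  have hRa0' : (0:ℝ) ≤ Ra := le_max_right _ _
  have hRb0' : (0:ℝ) ≤ Rb := le_max_right _ _
  have hRab0' : (0:ℝ) ≤ Rab := le_max_right _ _
  have hRax : ‖a‖ ≤ Ra := (le_max_right Ra0 ‖a‖).trans (le_max_left _ 0)
  have hRbx : ‖b‖ ≤ Rb := (le_max_right Rb0 ‖b‖).trans (le_max_left _ 0)
  have hRabx : ‖a + b‖ ≤ Rab := (le_max_right Rab0 ‖a + b‖).trans (le_max_left _ 0)
  have hQa1 : ∫ u in Set.Ico (0:ℝ) 1, quantileFun μa u = ∫ t, t ∂μa := by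
    simpa using integral_comp_quantileFun μa hRa hRa0' (f := fun t => t) continuous_id
  have hQb1 : ∫ u in Set.Ico (0:ℝ) 1, quantileFun μb u = ∫ t, t ∂μb := by
    simpa using integral_comp_quantileFun μb hRb hRb0' (f := fun t => t) continuous_id
  have hQab1 : ∫ u in Set.Ico (0:ℝ) 1, quantileFun μab u = ∫ t, t ∂μab := by
    simpa using integral_comp_quantileFun μab hRab hRab0' (f := fun t => t) continuous_id
  have hta : τ a = ((∫ t, t ∂μa : ℝ) : ℂ) := by simpa using hμa 1
  have htb : τ b = ((∫ t, t ∂μb : ℝ) : ℂ) := by simpa using hμb 1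
  have htab : τ (a + b) = ((∫ t, t ∂μab : ℝ) : ℂ) := by simpa using hμab 1
  refine ⟨?_, ?_, ?_⟩
  · rintro s ⟨hs0, hs1⟩
    have hEa := integral_quantile_eq μa hRa hRa0' hs0 hs1
    have hEb := integral_quantile_eq μb hRb hRb0' hs0 hs1
    have hK := key_ineq τ hτtrace hτpos hτcont haSA hbSA μa μb μab hRa0' hRb0' hRab0'
      hRax hRbx hRabx hRa hRb hRab hμa hμb hμab (quantileFun μa s) (quantileFun μb s)
    have hG := integral_quantile_ge μab hRab hRab0' hs0 hs1
      (quantileFun μa s + quantileFun μb s)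
    rw [hEa, hEb]
    linarith [mul_add s (quantileFun μa s) (quantileFun μb s)]
  · rw [hQa1, hQb1, hQab1]
    have hC : ((∫ t, t ∂μab : ℝ) : ℂ) = ((∫ t, t ∂μa : ℝ) : ℂ) + ((∫ t, t ∂μb : ℝ) : ℂ) := by
      rw [← hta, ← htb, ← htab, map_add]
    exact_mod_cast hC
  · rw [hQab1]
    have h1 : ((∫ t, t ∂μab : ℝ) : ℂ) = τ a + τ b := by rw [← map_add]; exact htab.symm
    have := congrArg Complex.re h1
    simpa using this
end
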